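/- arXiv:2512.12589 — 4 statements merged into one kernel-verified Lean document; each statement's English description precedes it below -/
import Mathlib

section
/- Let G be a group and let A₀, A₁, B₀, B₁ be subsets such that each Aᵢ is a right coset of a subgroup Uᵢ and a left coset of a subgroup Vᵢ, and each Bᵢ is a right coset of Vᵢ. If A₀ ∩ A₁ ≠ ∅ and B₀ ∩ B₁ ≠ ∅, then (A₀ ∩ A₁)·(B₀ ∩ B₁) = (A₀·B₀) ∩ (A₁·B₁), where · denotes setwise product. -/
open Pointwise

private lemma inter_mul_singleton' {G : Type*} [Group G] (s t : Set G) (b : G) :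
    (s ∩ t) * {b} = (s * {b}) ∩ (t * {b}) := by
  simp only [Set.mul_singleton]
  exact Set.image_inter (mul_left_injective b)

private lemma coe_mul_singleton_mem {G : Type*} [Group G] {V : Subgroup G} {v : G}
    (hv : v ∈ V) : (V : Set G) * {v} = (V : Set G) := by
  ext x
  simp only [Set.mem_mul, Set.mem_singleton_iff, SetLike.mem_coe]
  constructor
  · rintro ⟨u, hu, w, rfl, rfl⟩; exact mul_mem hu hv
  · intro hx; exact ⟨x * v⁻¹, mul_mem hx (inv_mem hv), v, rfl, by simp⟩

/-- If `Aᵢ` is a right coset of `Uᵢ` and a left coset of `Vᵢ`, and `Bᵢ` is a right coset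
of `Vᵢ` (i = 0,1), and `A₀ ∩ A₁ ≠ ∅ ≠ B₀ ∩ B₁`, then
`(A₀ ∩ A₁)·(B₀ ∩ B₁) = (A₀·B₀) ∩ (A₁·B₁)`. -/
theorem stmt1 (G : Type*) [Group G]
    (U₀ U₁ V₀ V₁ : Subgroup G) (A₀ A₁ B₀ B₁ : Set G)
    (hA₀r : ∃ g : G, A₀ = (U₀ : Set G) * {g}) (hA₀l : ∃ g : G, A₀ = g • (V₀ : Set G))
    (hA₁r : ∃ g : G, A₁ = (U₁ : Set G) * {g}) (hA₁l : ∃ g : G, A₁ = g • (V₁ : Set G))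
    (hB₀ : ∃ g : G, B₀ = (V₀ : Set G) * {g}) (hB₁ : ∃ g : G, B₁ = (V₁ : Set G) * {g})
    (hA : (A₀ ∩ A₁).Nonempty) (hB : (B₀ ∩ B₁).Nonempty) :
    (A₀ ∩ A₁) * (B₀ ∩ B₁) = (A₀ * B₀) ∩ (A₁ * B₁) := by
  obtain ⟨a, ha₀, ha₁⟩ := hA
  obtain ⟨b, hb₀, hb₁⟩ := hB
  have keyA : ∀ (V : Subgroup G) (A : Set G), (∃ g : G, A = g • (V : Set G)) → a ∈ A →
      A = a • (V : Set G) := by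
    rintro V A ⟨g, rfl⟩ ha
    obtain ⟨v, hv, hav⟩ := Set.mem_smul_set.mp ha
    rw [← hav, smul_eq_mul, mul_smul, smul_coe_set hv]
  have keyB : ∀ (V : Subgroup G) (B : Set G), (∃ g : G, B = (V : Set G) * {g}) → b ∈ B →
      B = (V : Set G) * {b} := by
    rintro V B ⟨g, rfl⟩ hb
    obtain ⟨v, hv, g', hg', h⟩ := hb
    rw [Set.mem_singleton_iff] at hg'; subst hg'
    rw [← h, ← Set.singleton_mul_singleton, ← mul_assoc, coe_mul_singleton_mem hv]
  have eA₀ := keyA V₀ A₀ hA₀l ha₀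
  have eA₁ := keyA V₁ A₁ hA₁l ha₁
  have eB₀ := keyB V₀ B₀ hB₀ hb₀
  have eB₁ := keyB V₁ B₁ hB₁ hb₁
  have hVV : (V₀ : Set G) ∩ (V₁ : Set G) = ((V₀ ⊓ V₁ : Subgroup G) : Set G) := by
    simp [Subgroup.coe_inf]
  have hAint : A₀ ∩ A₁ = a • ((V₀ ⊓ V₁ : Subgroup G) : Set G) := by
    rw [eA₀, eA₁, ← Set.smul_set_inter, hVV]
  have hBint : B₀ ∩ B₁ = ((V₀ ⊓ V₁ : Subgroup G) : Set G) * {b} := by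
    rw [eB₀, eB₁, ← inter_mul_singleton', hVV]
  rw [hAint, hBint, eA₀, eA₁, eB₀, eB₁]
  rw [smul_mul_assoc, smul_mul_assoc, smul_mul_assoc, ← mul_assoc, ← mul_assoc, ← mul_assoc,
    coe_mul_coe, coe_mul_coe, coe_mul_coe, ← Set.smul_set_inter, ← inter_mul_singleton', hVV]
end

section
/- Let G be a topological group and let W(G) be the set of left cosets of open subgroups of G from a family S_G of open subgroups closed under conjugation and finite intersection and forming a neighbourhood basis of the identity, together with ∅, where A·B is defined as the setwise product AB exactly when A is a left coset and B a right coset of the same subgroup, A⁻¹ is the setwise inverse, and ∩ is intersection. Then W(G) is a meet groupoid. -/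
open Pointwise

/-- A groupoid: a partial binary operation `mul` (with `none` meaning undefined) and a
total inverse, satisfying associativity with matching definedness, with `A·A⁻¹` and
`A⁻¹·A` always defined, and the cancellation laws. -/
structure PGroupoid (M : Type u) where
  mul : M → M → Option M
  inv : M → M
  assoc : ∀ A B C : M, ((mul A B).bind fun X => mul X C) = ((mul B C).bind fun Y => mul A Y)
  mul_inv_def : ∀ A : M, (mul A (inv A)).isSome
  inv_mul_def : ∀ A : M, (mul (inv A) A).isSome
  cancel_right : ∀ A B C : M, mul A B = some C → mul C (inv B) = some A
  cancel_left : ∀ A B C U : M, mul A B = some C → mul (inv A) A = some U → mul U B = some B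

/-- A meet groupoid: a groupoid which is also a meet semilattice with least element `e`
(denoting `∅`), satisfying the compatibility axioms of Nies–Schlicht. -/
structure MeetGroupoid (M : Type u) extends PGroupoid M where
  meet : M → M → M
  e : M
  meet_comm : ∀ A B : M, meet A B = meet B A
  meet_assoc : ∀ A B C : M, meet (meet A B) C = meet A (meet B C)
  meet_idem : ∀ A : M, meet A A = A
  meet_e : ∀ A : M, meet e A = e
  inv_e : inv e = e
  mul_e_e : mul e e = some e
  e_mul : ∀ A : M, A ≠ e → mul e A = none
  mul_e : ∀ A : M, A ≠ e → mul A e = none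
  idem_meet_ne : ∀ U V : M, mul U U = some U → mul V V = some V → U ≠ e → V ≠ e →
    meet U V ≠ e
  inv_le_iff : ∀ A B : M, meet A B = A ↔ meet (inv A) (inv B) = inv A
  meet_mul : ∀ A₀ A₁ B₀ B₁ C₀ C₁ : M, mul A₀ B₀ = some C₀ → mul A₁ B₁ = some C₁ →
    meet A₀ A₁ ≠ e → meet B₀ B₁ ≠ e →
    mul (meet A₀ A₁) (meet B₀ B₁) = some (meet C₀ C₁)

/-- A full meet groupoid: a meet groupoid satisfying the "level up" and "level down"
axioms for left and right *cosets. -/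
structure FullMeetGroupoid (M : Type u) extends MeetGroupoid M where
  levelUp_left : ∀ U V A : M, mul U U = some U → mul V V = some V → meet U V = U →
    mul A U = some A → A ≠ e → ∃! B : M, mul B V = some B ∧ meet A B = A
  levelUp_right : ∀ U V A : M, mul U U = some U → mul V V = some V → meet U V = U →
    mul U A = some A → A ≠ e → ∃! B : M, mul V B = some B ∧ meet A B = A
  levelDown_left : ∀ U V B : M, mul U U = some U → mul V V = some V → meet U V = U →
    U ≠ V → mul B V = some B → B ≠ e →
    ∃ A₀ A₁ : M, A₀ ≠ A₁ ∧ mul A₀ U = some A₀ ∧ mul A₁ U = some A₁ ∧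
      meet A₀ B = A₀ ∧ meet A₁ B = A₁
  levelDown_right : ∀ U V B : M, mul U U = some U → mul V V = some V → meet U V = U →
    U ≠ V → mul V B = some B → B ≠ e →
    ∃ A₀ A₁ : M, A₀ ≠ A₁ ∧ mul U A₀ = some A₀ ∧ mul U A₁ = some A₁ ∧
      meet A₀ B = A₀ ∧ meet A₁ B = A₁


namespace S8
variable {G : Type*} [Group G]

lemma sm (g : G) (A : Set G) : g • A = {g} * A := by
  rw [Set.singleton_mul]; ext x
  simp only [Set.mem_smul_set, smul_eq_mul, Set.mem_image]

lemma can1 (a : G) (X : Set G) : ({a} : Set G) * ({a⁻¹} * X) = X := by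
  rw [← mul_assoc, Set.singleton_mul_singleton, mul_inv_cancel, Set.singleton_one, one_mul]

lemma can2 (a : G) (X : Set G) : ({a⁻¹} : Set G) * ({a} * X) = X := by
  rw [← mul_assoc, Set.singleton_mul_singleton, inv_mul_cancel, Set.singleton_one, one_mul]

lemma mU (U : Subgroup G) (X : Set G) : (U : Set G) * ((U : Set G) * X) = (U : Set G) * X := by
  rw [← mul_assoc, coe_mul_coe]

-- the master simp set
lemma stabL (g : G) (U : Subgroup G) : ({g} * (U : Set G))⁻¹ * ({g} * (U : Set G)) = U := by
  simp only [mul_inv_rev, inv_coe_set, Set.inv_singleton, mul_assoc, can2, mU, coe_mul_coe]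

lemma stabR (U : Subgroup G) (h : G) :
    ((U : Set G) * {h}) * ((U : Set G) * {h})⁻¹ = U := by
  simp only [mul_inv_rev, inv_coe_set, Set.inv_singleton, mul_assoc, can1, mU, coe_mul_coe]

lemma stabL2 (g : G) (U : Subgroup G) :
    ({g} * (U : Set G)) * ({g} * (U : Set G))⁻¹ = {g} * (U : Set G) * {g⁻¹} := by
  simp only [mul_inv_rev, inv_coe_set, Set.inv_singleton, mul_assoc, can1, can2, mU, coe_mul_coe]

lemma stabR2 (U : Subgroup G) (h : G) :
    ((U : Set G) * {h})⁻¹ * ((U : Set G) * {h}) = {h⁻¹} * (U : Set G) * {h} := by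
  simp only [mul_inv_rev, inv_coe_set, Set.inv_singleton, mul_assoc, can1, can2, mU, coe_mul_coe]

lemma stab3L (g : G) (U : Subgroup G) (h : G) :
    ({g} * (U : Set G) * {h})⁻¹ * ({g} * (U : Set G) * {h}) = {h⁻¹} * (U : Set G) * {h} := by
  simp only [mul_inv_rev, inv_coe_set, Set.inv_singleton, mul_assoc, can1, can2, mU, coe_mul_coe]

lemma stab3R (g : G) (U : Subgroup G) (h : G) :
    ({g} * (U : Set G) * {h}) * ({g} * (U : Set G) * {h})⁻¹ = {g} * (U : Set G) * {g⁻¹} := by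
  simp only [mul_inv_rev, inv_coe_set, Set.inv_singleton, mul_assoc, can1, can2, mU, coe_mul_coe]

lemma prod3 (g : G) (U : Subgroup G) (h : G) :
    ({g} * (U : Set G)) * ((U : Set G) * {h}) = {g} * (U : Set G) * {h} := by
  simp only [mul_assoc, mU]

lemma bc (U : Subgroup G) (h k : G) :
    ((U : Set G) * {h}) * (({h⁻¹} * (U : Set G) * {h}) * {k}) = (U : Set G) * {h * k} := by
  simp only [mul_assoc, can1, can2, mU, Set.singleton_mul_singleton]

lemma invL (g : G) (U : Subgroup G) : ({g} * (U : Set G))⁻¹ = (U : Set G) * {g⁻¹} := by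
  simp only [mul_inv_rev, inv_coe_set, Set.inv_singleton]

lemma invR (U : Subgroup G) (h : G) : ((U : Set G) * {h})⁻¹ = {h⁻¹} * (U : Set G) := by
  simp only [mul_inv_rev, inv_coe_set, Set.inv_singleton]

lemma neL (g : G) (U : Subgroup G) : ({g} * (U : Set G)).Nonempty :=
  (Set.singleton_nonempty g).mul ⟨1, U.one_mem⟩

lemma neR (U : Subgroup G) (h : G) : ((U : Set G) * {h}).Nonempty :=
  Set.Nonempty.mul ⟨1, U.one_mem⟩ (Set.singleton_nonempty h)

lemma neT (g : G) (U : Subgroup G) (h : G) : ({g} * (U : Set G) * {h}).Nonempty :=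
  (neL g U).mul (Set.singleton_nonempty h)

lemma su {U : Subgroup G} {u : G} (hu : u ∈ U) : ({u} : Set G) * U = U := by
  rw [← sm]; exact smul_coe_set hu

lemma us {U : Subgroup G} {u : G} (hu : u ∈ U) : (U : Set G) * {u} = U := by
  ext x
  simp only [Set.mul_singleton, Set.mem_image, SetLike.mem_coe]
  constructor
  · rintro ⟨v, hv, rfl⟩; exact U.mul_mem hv hu
  · intro hx; exact ⟨x * u⁻¹, U.mul_mem hx (U.inv_mem hu), by group⟩

lemma lcoset_repr {U : Subgroup G} {g x : G} (hx : x ∈ ({g} : Set G) * U) :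
    ({x} : Set G) * U = {g} * U := by
  rw [Set.singleton_mul] at hx
  obtain ⟨u, hu, rfl⟩ := hx
  rw [← Set.singleton_mul_singleton, mul_assoc, su hu]

lemma rcoset_repr {U : Subgroup G} {h y : G} (hy : y ∈ (U : Set G) * {h}) :
    (U : Set G) * {y} = (U : Set G) * {h} := by
  rw [Set.mul_singleton] at hy
  obtain ⟨u, hu, rfl⟩ := hy
  rw [← Set.singleton_mul_singleton, ← mul_assoc, us hu]

lemma linter (x : G) (s t : Set G) : ({x} * s) ∩ ({x} * t) = {x} * (s ∩ t) := by
  rw [← sm, ← sm, ← sm, Set.smul_set_inter]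

lemma rinter (s t : Set G) (y : G) : (s * {y}) ∩ (t * {y}) = (s ∩ t) * {y} := by
  simp only [Set.mul_singleton]
  exact (Set.image_inter (mul_left_injective y)).symm

lemma tinter (x : G) (s t : Set G) (y : G) :
    ({x} * s * {y}) ∩ ({x} * t * {y}) = {x} * (s ∩ t) * {y} := by
  rw [rinter, linter]

lemma map_conj_coe (U : Subgroup G) (c : G) :
    ((Subgroup.map (MulAut.conj c).toMonoidHom U : Subgroup G) : Set G)
      = {c} * (U : Set G) * {c⁻¹} := by
  ext x
  simp only [Subgroup.coe_map, Set.mem_image, SetLike.mem_coe, MulEquiv.coe_toMonoidHom,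
    MulAut.conj_apply, Set.mul_singleton, Set.singleton_mul, Set.mem_image]
  constructor
  · rintro ⟨u, hu, rfl⟩; exact ⟨c * u, ⟨u, hu, rfl⟩, rfl⟩
  · rintro ⟨z, ⟨u, hu, rfl⟩, rfl⟩; exact ⟨u, hu, rfl⟩


/-- Definedness condition for the partial product. -/
def D (A B : Set G) : Prop := A.Nonempty ∧ B.Nonempty ∧ A⁻¹ * A = B * B⁻¹

/-- Membership in `W(G)`. -/
def P (S : Set (Subgroup G)) (A : Set G) : Prop :=
  A = ∅ ∨ ∃ g : G, ∃ U ∈ S, A = g • (U : Set G)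

variable {S : Set (Subgroup G)}

lemma rep {A : Set G} (hA : P S A) (hne : A.Nonempty) :
    ∃ U ∈ S, ∃ g : G, A = {g} * (U : Set G) := by
  rcases hA with h | ⟨g, U, hU, rfl⟩
  · exact absurd h hne.ne_empty
  · exact ⟨U, hU, g, sm g _⟩

lemma repD {A B : Set G} (hA : P S A) (hB : P S B) (hD : D A B) :
    ∃ U ∈ S, ∃ g h : G, A = {g} * (U : Set G) ∧ B = (U : Set G) * {h} := by
  obtain ⟨U, hU, g, rfl⟩ := rep hA hD.1
  obtain ⟨V, hV, h, rfl⟩ := rep hB hD.2.1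
  have hst : (U : Set G) = {h} * (V : Set G) * {h⁻¹} := by
    have := hD.2.2
    rw [stabL, stabL2] at this
    exact this
  refine ⟨U, hU, g, h, rfl, ?_⟩
  rw [hst]
  simp only [mul_assoc, Set.singleton_mul_singleton, inv_mul_cancel, Set.singleton_one, mul_one]

lemma memT (hconj : ∀ U ∈ S, ∀ g : G, Subgroup.map (MulAut.conj g).toMonoidHom U ∈ S)
    {U : Subgroup G} (hU : U ∈ S) (g h : G) : P S ({g} * (U : Set G) * {h}) := by
  refine Or.inr ⟨g * h, Subgroup.map (MulAut.conj h⁻¹).toMonoidHom U, hconj U hU h⁻¹, ?_⟩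
  rw [sm, map_conj_coe]
  simp only [inv_inv, mul_assoc, can1, ← Set.singleton_mul_singleton]

lemma mulW (hconj : ∀ U ∈ S, ∀ g : G, Subgroup.map (MulAut.conj g).toMonoidHom U ∈ S)
    {A B : Set G} (hA : P S A) (hB : P S B) (hD : D A B) : P S (A * B) := by
  obtain ⟨U, hU, g, h, rfl, rfl⟩ := repD hA hB hD
  rw [prod3]
  exact memT hconj hU g h

lemma invW (hconj : ∀ U ∈ S, ∀ g : G, Subgroup.map (MulAut.conj g).toMonoidHom U ∈ S)
    {A : Set G} (hA : P S A) : P S A⁻¹ := by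
  rcases A.eq_empty_or_nonempty with rfl | hne
  · exact Or.inl Set.inv_empty
  · obtain ⟨U, hU, g, rfl⟩ := rep hA hne
    have : ({g} * (U : Set G))⁻¹ = {(1 : G)} * (U : Set G) * {g⁻¹} := by
      rw [invL, Set.singleton_one, one_mul]
    rw [this]
    exact memT hconj hU 1 g⁻¹


lemma mulW' (hconj : ∀ U ∈ S, ∀ g : G, Subgroup.map (MulAut.conj g).toMonoidHom U ∈ S)
    {A B : Set G} (hA : P S A) (hB : P S B)
    (h : (A = ∅ ∧ B = ∅) ∨ D A B) : P S (A * B) := by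
  rcases h with ⟨rfl, rfl⟩ | hD
  · exact Or.inl (by rw [Set.empty_mul])
  · exact mulW hconj hA hB hD

lemma meetW (hinter : ∀ U ∈ S, ∀ V ∈ S, U ⊓ V ∈ S)
    {A B : Set G} (hA : P S A) (hB : P S B) : P S (A ∩ B) := by
  rcases (A ∩ B).eq_empty_or_nonempty with h | ⟨x, hxA, hxB⟩
  · exact Or.inl h
  · obtain ⟨U₀, hU₀, g₀, rfl⟩ := rep hA ⟨x, hxA⟩
    obtain ⟨U₁, hU₁, g₁, rfl⟩ := rep hB ⟨x, hxB⟩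
    refine Or.inr ⟨x, U₀ ⊓ U₁, hinter U₀ hU₀ U₁ hU₁, ?_⟩
    rw [sm, ← lcoset_repr hxA, ← lcoset_repr hxB, linter, Subgroup.coe_inf]

lemma one_mem_of_idem {A : Set G} (hA : P S A) (hD : D A A) (hAA : A * A = A) :
    (1 : G) ∈ A := by
  obtain ⟨U, hU, g, h, h1, h2⟩ := repD hA hA hD
  have key : ({g} * (U : Set G)) * ((U : Set G) * {h}) = {g} * (U : Set G) := by
    rw [← h1, ← h2, hAA, h1]
  rw [prod3] at key
  have key2 := congrArg (fun X => ({g⁻¹} : Set G) * X) key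
  simp only [← mul_assoc, Set.singleton_mul_singleton, inv_mul_cancel, Set.singleton_one,
    one_mul] at key2
  have hh : h ∈ U := by
    have : h ∈ (U : Set G) * {h} := by
      rw [Set.mul_singleton]; exact ⟨1, U.one_mem, one_mul h⟩
    rw [key2] at this; exact this
  rw [h2, us hh]
  exact U.one_mem

lemma core (hconj : ∀ U ∈ S, ∀ g : G, Subgroup.map (MulAut.conj g).toMonoidHom U ∈ S)
    {A B C : Set G} (hA : P S A) (hB : P S B) (hC : P S C)
    (h1 : (A = ∅ ∧ B = ∅) ∨ D A B) (h2 : (A * B = ∅ ∧ C = ∅) ∨ D (A * B) C) :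
    ((B = ∅ ∧ C = ∅) ∨ D B C) ∧ ((A = ∅ ∧ B * C = ∅) ∨ D A (B * C)) := by
  rcases h1 with ⟨rfl, rfl⟩ | hD
  · rcases h2 with ⟨-, rfl⟩ | hD2
    · exact ⟨Or.inl ⟨rfl, rfl⟩, Or.inl ⟨rfl, by rw [Set.empty_mul]⟩⟩
    · rw [Set.empty_mul] at hD2
      exact absurd hD2.1 (by simp [Set.not_nonempty_empty])
  · rcases h2 with ⟨h0, -⟩ | hD2
    · exact absurd h0 (hD.1.mul hD.2.1).ne_empty
    · obtain ⟨U, hU, g, h, rfl, rfl⟩ := repD hA hB hD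
      rw [prod3] at hD2
      obtain ⟨V, hV, g', k, hABr, hCr⟩ := repD (memT hconj hU g h) hC hD2
      have hVcoe : (V : Set G) = {h⁻¹} * (U : Set G) * {h} := by
        have := congrArg (fun X => X⁻¹ * X) hABr
        simp only [stab3L, stabL] at this
        exact this.symm
      set V' : Subgroup G := Subgroup.map (MulAut.conj h⁻¹).toMonoidHom U with hV'
      have hV'coe : (V' : Set G) = {h⁻¹} * (U : Set G) * {h} := by
        rw [hV', map_conj_coe, inv_inv]
      have hCrv : C = (V' : Set G) * {k} := by rw [hCr, hVcoe, ← hV'coe]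
      have hBC : ((U : Set G) * {h}) * C = (U : Set G) * {h * k} := by
        rw [hCrv, hV'coe]; exact bc U h k
      refine ⟨Or.inr ⟨neR U h, ?_, ?_⟩, Or.inr ⟨neL g U, ?_, ?_⟩⟩
      · rw [hCrv]; exact neR V' k
      · rw [hCrv, stabR2, stabR, hV'coe]
      · rw [hBC]; exact neR U (h * k)
      · rw [hBC, stabL, stabR]

lemma core' (hconj : ∀ U ∈ S, ∀ g : G, Subgroup.map (MulAut.conj g).toMonoidHom U ∈ S)
    {A B C : Set G} (hA : P S A) (hB : P S B) (hC : P S C)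
    (h1 : (B = ∅ ∧ C = ∅) ∨ D B C) (h2 : (A = ∅ ∧ B * C = ∅) ∨ D A (B * C)) :
    ((A = ∅ ∧ B = ∅) ∨ D A B) ∧ ((A * B = ∅ ∧ C = ∅) ∨ D (A * B) C) := by
  rcases h1 with ⟨rfl, rfl⟩ | hD
  · rcases h2 with ⟨rfl, -⟩ | hD2
    · exact ⟨Or.inl ⟨rfl, rfl⟩, Or.inl ⟨by rw [Set.empty_mul], rfl⟩⟩
    · rw [Set.empty_mul] at hD2
      exact absurd hD2.2.1 (by simp [Set.not_nonempty_empty])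
  · rcases h2 with ⟨-, h0⟩ | hD2
    · exact absurd h0 (hD.1.mul hD.2.1).ne_empty
    · obtain ⟨V, hV, b, c, rfl, rfl⟩ := repD hB hC hD
      rw [prod3] at hD2
      obtain ⟨U, hU, g, h, hAr, hBCr⟩ := repD hA (memT hconj hV b c) hD2
      have hUcoe : (U : Set G) = {b} * (V : Set G) * {b⁻¹} := by
        have := congrArg (fun X => X * X⁻¹) hBCr
        simp only [stab3R, stabR] at this
        exact this.symm
      have hUb : (U : Set G) * {b} = {b} * (V : Set G) := by
        rw [hUcoe]
        simp only [mul_assoc, Set.singleton_mul_singleton, inv_mul_cancel, Set.singleton_one,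
          mul_one]
      have hAB : A * ({b} * (V : Set G)) = {g} * (U : Set G) * {b} := by
        rw [hAr, ← hUb, prod3]
      have hVb : {b⁻¹} * (U : Set G) * {b} = (V : Set G) := by
        rw [hUcoe]
        simp only [mul_assoc, Set.singleton_mul_singleton, inv_mul_cancel, mul_inv_cancel,
          Set.singleton_one, mul_one, one_mul, can2]
      refine ⟨Or.inr ⟨hD2.1, neL b V, ?_⟩, Or.inr ⟨?_, neR V c, ?_⟩⟩
      · rw [hAr, stabL, stabL2, hUcoe]
      · rw [hAB]; exact neT g U b
      · rw [hAB, stab3L, hVb, stabR]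

section Groupoid
open scoped Classical

variable (S) in
/-- The carrier. -/
abbrev W := {A : Set G // A = ∅ ∨ ∃ g : G, ∃ U ∈ S, A = g • (U : Set G)}

variable (hconj : ∀ U ∈ S, ∀ g : G, Subgroup.map (MulAut.conj g).toMonoidHom U ∈ S)
variable (hinter : ∀ U ∈ S, ∀ V ∈ S, U ⊓ V ∈ S)

noncomputable def wmul (A B : W S) : Option (W S) :=
  if A.1 = ∅ ∧ B.1 = ∅ then some ⟨∅, Or.inl rfl⟩
  else if hD : D A.1 B.1 then some ⟨A.1 * B.1, mulW hconj A.2 B.2 hD⟩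
  else none

lemma wmul_eq_some_iff {A B C : W S} :
    wmul hconj A B = some C ↔
      (((A.1 = ∅ ∧ B.1 = ∅) ∨ D A.1 B.1) ∧ C.1 = A.1 * B.1) := by
  unfold wmul
  split_ifs with h1 h2
  · simp only [Option.some.injEq]
    constructor
    · intro h
      have hc : C.1 = (∅ : Set G) := by rw [← congrArg Subtype.val h]
      exact ⟨Or.inl h1, by rw [hc, h1.1, h1.2, Set.empty_mul]⟩
    · rintro ⟨-, hc⟩
      exact Subtype.ext (by rw [hc, h1.1, h1.2, Set.empty_mul])
  · simp only [Option.some.injEq]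
    constructor
    · intro h; exact ⟨Or.inr h2, (congrArg Subtype.val h).symm⟩
    · rintro ⟨-, hc⟩; exact Subtype.ext hc.symm
  · constructor
    · intro h; exact absurd h (by simp)
    · rintro ⟨h | h, -⟩
      exacts [absurd h h1, absurd h h2]

lemma wmul_isSome_iff {A B : W S} :
    (wmul hconj A B).isSome ↔ ((A.1 = ∅ ∧ B.1 = ∅) ∨ D A.1 B.1) := by
  rw [Option.isSome_iff_exists]
  constructor
  · rintro ⟨C, hC⟩; exact ((wmul_eq_some_iff hconj).1 hC).1
  · intro h
    exact ⟨⟨A.1 * B.1, mulW' hconj A.2 B.2 h⟩, (wmul_eq_some_iff hconj).2 ⟨h, rfl⟩⟩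

end Groupoid

end S8

section MK
open scoped Classical
variable {G : Type*} [Group G] {S : Set (Subgroup G)}
variable (hconj : ∀ U ∈ S, ∀ g : G, Subgroup.map (MulAut.conj g).toMonoidHom U ∈ S)
variable (hinter : ∀ U ∈ S, ∀ V ∈ S, U ⊓ V ∈ S)

noncomputable def S8.mk : MeetGroupoid (S8.W S) where
  mul := S8.wmul hconj
  inv A := ⟨A.1⁻¹, S8.invW hconj A.2⟩
  meet A B := ⟨A.1 ∩ B.1, S8.meetW hinter A.2 B.2⟩
  e := ⟨∅, Or.inl rfl⟩
  assoc A B C := by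
    apply Option.ext; intro Z
    simp only [Option.mem_def, Option.bind_eq_some_iff, S8.wmul_eq_some_iff hconj]
    constructor
    · rintro ⟨X, ⟨c1, hX⟩, c2, hZ⟩
      rw [hX] at c2 hZ
      have h := S8.core hconj A.2 B.2 C.2 c1 c2
      exact ⟨⟨B.1 * C.1, S8.mulW' hconj B.2 C.2 h.1⟩, ⟨h.1, rfl⟩, h.2,
        by rw [hZ, mul_assoc]⟩
    · rintro ⟨Y, ⟨c1, hY⟩, c2, hZ⟩
      rw [hY] at c2 hZ
      have h := S8.core' hconj A.2 B.2 C.2 c1 c2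
      exact ⟨⟨A.1 * B.1, S8.mulW' hconj A.2 B.2 h.1⟩, ⟨h.1, rfl⟩, h.2,
        by rw [hZ, ← mul_assoc]⟩
  mul_inv_def A := by
    rw [S8.wmul_isSome_iff hconj]
    rcases A.1.eq_empty_or_nonempty with h | h
    · exact Or.inl ⟨h, by show A.1⁻¹ = ∅; rw [h, Set.inv_empty]⟩
    · exact Or.inr ⟨h, h.inv,
        by show A.1⁻¹ * A.1 = A.1⁻¹ * (A.1⁻¹)⁻¹; rw [inv_inv]⟩
  inv_mul_def A := by
    rw [S8.wmul_isSome_iff hconj]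
    rcases A.1.eq_empty_or_nonempty with h | h
    · exact Or.inl ⟨by show A.1⁻¹ = ∅; rw [h, Set.inv_empty], h⟩
    · exact Or.inr ⟨h.inv, h,
        by show (A.1⁻¹)⁻¹ * A.1⁻¹ = A.1 * A.1⁻¹; rw [inv_inv]⟩
  cancel_right A B C h := by
    rw [S8.wmul_eq_some_iff hconj] at h ⊢
    obtain ⟨hc, hC⟩ := h
    rcases hc with ⟨hA0, hB0⟩ | hD
    · refine ⟨Or.inl ⟨by rw [hC, hA0, hB0, Set.empty_mul],
        by show B.1⁻¹ = ∅; rw [hB0, Set.inv_empty]⟩, ?_⟩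
      show A.1 = C.1 * B.1⁻¹
      rw [hA0, hC, hA0, hB0, Set.empty_mul, Set.inv_empty, Set.empty_mul]
    · obtain ⟨U, hU, g, h, hAe, hBe⟩ := S8.repD A.2 B.2 hD
      have hCe : C.1 = {g} * (U : Set G) * {h} := by rw [hC, hAe, hBe, S8.prod3]
      have hBi : B.1⁻¹ = {h⁻¹} * (U : Set G) := by rw [hBe, S8.invR]
      refine ⟨Or.inr ⟨?_, ?_, ?_⟩, ?_⟩
      · rw [hCe]; exact S8.neT g U h
      · show (B.1⁻¹).Nonempty; rw [hBi]; exact S8.neL h⁻¹ U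
      · show C.1⁻¹ * C.1 = B.1⁻¹ * (B.1⁻¹)⁻¹
        rw [hCe, hBi, S8.stab3L, S8.stabL2, inv_inv]
      · show A.1 = C.1 * B.1⁻¹
        rw [hAe, hCe, hBi]
        simp only [mul_assoc, S8.can1, S8.can2, S8.mU, coe_mul_coe]
  cancel_left A B C Uw h1 h2 := by
    rw [S8.wmul_eq_some_iff hconj] at h1 h2 ⊢
    obtain ⟨hc1, hC⟩ := h1
    obtain ⟨-, hU⟩ := h2
    rcases hc1 with ⟨hA0, hB0⟩ | hD
    · have hU0 : Uw.1 = ∅ := by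
        rw [hU]; show A.1⁻¹ * A.1 = ∅; rw [hA0, Set.inv_empty, Set.empty_mul]
      exact ⟨Or.inl ⟨hU0, hB0⟩, by rw [hB0, hU0, Set.empty_mul]⟩
    · obtain ⟨U, hUS, g, h, hAe, hBe⟩ := S8.repD A.2 B.2 hD
      have hUe : Uw.1 = (U : Set G) := by
        rw [hU]; show A.1⁻¹ * A.1 = _; rw [hAe, S8.stabL]
      refine ⟨Or.inr ⟨⟨1, by rw [hUe]; exact U.one_mem⟩, hD.2.1, ?_⟩, ?_⟩
      · show Uw.1⁻¹ * Uw.1 = B.1 * B.1⁻¹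
        rw [hUe, hBe, inv_coe_set, coe_mul_coe, S8.stabR]
      · rw [hUe, hBe]; exact (S8.mU U {h}).symm
  meet_comm A B := Subtype.ext (Set.inter_comm _ _)
  meet_assoc A B C := Subtype.ext (Set.inter_assoc _ _ _)
  meet_idem A := Subtype.ext (Set.inter_self _)
  meet_e A := Subtype.ext (Set.empty_inter _)
  inv_e := Subtype.ext Set.inv_empty
  mul_e_e := (S8.wmul_eq_some_iff hconj).2 ⟨Or.inl ⟨rfl, rfl⟩, by
    show (∅ : Set G) = ∅ * ∅; rw [Set.empty_mul]⟩
  e_mul A hA := by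
    have hA' : A.1 ≠ ∅ := fun h => hA (Subtype.ext h)
    rcases hw : S8.wmul hconj ⟨∅, Or.inl rfl⟩ A with _ | C
    · rfl
    · exfalso
      rcases ((S8.wmul_eq_some_iff hconj).1 hw).1 with ⟨-, h⟩ | hD
      · exact hA' h
      · exact hD.1.ne_empty rfl
  mul_e A hA := by
    have hA' : A.1 ≠ ∅ := fun h => hA (Subtype.ext h)
    rcases hw : S8.wmul hconj A ⟨∅, Or.inl rfl⟩ with _ | C
    · rfl
    · exfalso
      rcases ((S8.wmul_eq_some_iff hconj).1 hw).1 with ⟨h, -⟩ | hD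
      · exact hA' h
      · exact hD.2.1.ne_empty rfl
  idem_meet_ne Uw Vw hU hV hUne hVne := by
    rw [S8.wmul_eq_some_iff hconj] at hU hV
    have hUe : Uw.1 ≠ ∅ := fun h => hUne (Subtype.ext h)
    have hVe : Vw.1 ≠ ∅ := fun h => hVne (Subtype.ext h)
    have hDU : D Uw.1 Uw.1 := hU.1.resolve_left (fun h => hUe h.1)
    have hDV : D Vw.1 Vw.1 := hV.1.resolve_left (fun h => hVe h.1)
    have h1U := S8.one_mem_of_idem Uw.2 hDU hU.2.symm
    have h1V := S8.one_mem_of_idem Vw.2 hDV hV.2.symm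
    intro heq
    have : Uw.1 ∩ Vw.1 = ∅ := congrArg Subtype.val heq
    exact (Set.eq_empty_iff_forall_notMem.1 this) 1 ⟨h1U, h1V⟩
  inv_le_iff A B := by
    rw [Subtype.ext_iff, Subtype.ext_iff]
    show A.1 ∩ B.1 = A.1 ↔ A.1⁻¹ ∩ B.1⁻¹ = A.1⁻¹
    rw [Set.inter_eq_left, Set.inter_eq_left]
    exact ⟨fun h => Set.inv_subset_inv.2 h, fun h => by
      simpa using Set.inv_subset_inv.2 h⟩
  meet_mul A₀ A₁ B₀ B₁ C₀ C₁ h0 h1 hAne hBne := by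
    rw [S8.wmul_eq_some_iff hconj] at h0 h1 ⊢
    have hAe : A₀.1 ∩ A₁.1 ≠ ∅ := fun h => hAne (Subtype.ext h)
    have hBe : B₀.1 ∩ B₁.1 ≠ ∅ := fun h => hBne (Subtype.ext h)
    obtain ⟨x, hxA0, hxA1⟩ := Set.nonempty_iff_ne_empty.2 hAe
    obtain ⟨y, hyB0, hyB1⟩ := Set.nonempty_iff_ne_empty.2 hBe
    have hD0 : D A₀.1 B₀.1 := h0.1.resolve_left
      (fun h => hAe (by rw [h.1, Set.empty_inter]))
    have hD1 : D A₁.1 B₁.1 := h1.1.resolve_left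
      (fun h => hAe (by rw [Set.inter_comm, h.1, Set.empty_inter]))
    obtain ⟨U₀, hU₀, g₀, k₀, hA₀e, hB₀e⟩ := S8.repD A₀.2 B₀.2 hD0
    obtain ⟨U₁, hU₁, g₁, k₁, hA₁e, hB₁e⟩ := S8.repD A₁.2 B₁.2 hD1
    have hA0x : A₀.1 = {x} * (U₀ : Set G) := by
      rw [hA₀e]; exact (S8.lcoset_repr (hA₀e ▸ hxA0)).symm
    have hA1x : A₁.1 = {x} * (U₁ : Set G) := by
      rw [hA₁e]; exact (S8.lcoset_repr (hA₁e ▸ hxA1)).symm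
    have hB0y : B₀.1 = (U₀ : Set G) * {y} := by
      rw [hB₀e]; exact (S8.rcoset_repr (hB₀e ▸ hyB0)).symm
    have hB1y : B₁.1 = (U₁ : Set G) * {y} := by
      rw [hB₁e]; exact (S8.rcoset_repr (hB₁e ▸ hyB1)).symm
    have hMA : A₀.1 ∩ A₁.1 = {x} * ((U₀ ⊓ U₁ : Subgroup G) : Set G) := by
      rw [hA0x, hA1x, S8.linter, Subgroup.coe_inf]
    have hMB : B₀.1 ∩ B₁.1 = ((U₀ ⊓ U₁ : Subgroup G) : Set G) * {y} := by
      rw [hB0y, hB1y, S8.rinter, Subgroup.coe_inf]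
    refine ⟨Or.inr ⟨Set.nonempty_iff_ne_empty.2 hAe, Set.nonempty_iff_ne_empty.2 hBe, ?_⟩, ?_⟩
    · show (A₀.1 ∩ A₁.1)⁻¹ * (A₀.1 ∩ A₁.1) = (B₀.1 ∩ B₁.1) * (B₀.1 ∩ B₁.1)⁻¹
      rw [hMA, hMB, S8.stabL, S8.stabR]
    · show C₀.1 ∩ C₁.1 = (A₀.1 ∩ A₁.1) * (B₀.1 ∩ B₁.1)
      rw [hMA, hMB, S8.prod3, h0.2, h1.2, hA0x, hA1x, hB0y, hB1y, S8.prod3, S8.prod3,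
        S8.tinter, ← Subgroup.coe_inf]

end MK

/-- For a topological group `G` with a family `S` of open subgroups closed under
conjugation and finite intersection and forming a neighbourhood basis of the identity,
the set `W(G)` of left cosets of subgroups in `S` together with `∅` — with product of a
left coset and a right coset of the same subgroup, setwise inverse, and intersection —
is a meet groupoid. -/
theorem stmt8 (G : Type*) [Group G] [TopologicalSpace G] [IsTopologicalGroup G]
    (S : Set (Subgroup G))
    (hopen : ∀ U ∈ S, IsOpen (U : Set G))
    (hconj : ∀ U ∈ S, ∀ g : G, Subgroup.map (MulAut.conj g).toMonoidHom U ∈ S)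
    (hinter : ∀ U ∈ S, ∀ V ∈ S, U ⊓ V ∈ S)
    (hbasis : (nhds (1 : G)).HasBasis (· ∈ S) (fun U => (U : Set G))) :
    ∃ mg : MeetGroupoid {A : Set G // A = ∅ ∨ ∃ g : G, ∃ U ∈ S, A = g • (U : Set G)},
      mg.e = ⟨∅, Or.inl rfl⟩ ∧
      (∀ A, (mg.inv A : Set G) = (A : Set G)⁻¹) ∧
      (∀ A B, (mg.meet A B : Set G) = (A : Set G) ∩ (B : Set G)) ∧
      (∀ A B C, mg.mul A B = some C → (C : Set G) = (A : Set G) * (B : Set G)) ∧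
      (∀ A B, A ≠ mg.e → B ≠ mg.e →
        ((mg.mul A B).isSome ↔ ∃ U ∈ S, (∃ g : G, (A : Set G) = g • (U : Set G)) ∧
          ∃ h : G, (B : Set G) = (U : Set G) * {h})) := by
  classical
  refine ⟨S8.mk hconj hinter, rfl, fun A => rfl, fun A B => rfl, ?_, ?_⟩
  · intro A B C h
    exact ((S8.wmul_eq_some_iff hconj).1 h).2
  · intro A B hA hB
    have hA' : (A : Set G) ≠ ∅ := fun h => hA (Subtype.ext h)
    have hB' : (B : Set G) ≠ ∅ := fun h => hB (Subtype.ext h)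
    show (S8.wmul hconj A B).isSome ↔ _
    rw [S8.wmul_isSome_iff hconj]
    constructor
    · rintro (⟨h0, -⟩ | hD)
      · exact absurd h0 hA'
      · obtain ⟨U, hU, g, h, hAe, hBe⟩ := S8.repD A.2 B.2 hD
        exact ⟨U, hU, ⟨g, by rw [hAe, S8.sm]⟩, h, hBe⟩
    · rintro ⟨U, hU, ⟨g, hAe⟩, h, hBe⟩
      rw [S8.sm] at hAe
      refine Or.inr ⟨Set.nonempty_iff_ne_empty.2 hA', Set.nonempty_iff_ne_empty.2 hB', ?_⟩
      rw [hAe, hBe, S8.stabL, S8.stabR]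
end

section
/- Let G be a Polish group with a countable neighbourhood basis S_G of the identity consisting of open subgroups, invariant under conjugation, and let W(G) be the set of left cosets of subgroups in S_G together with ∅. Then the map g ↦ R_g := {gU : U ∈ S_G} is a bijection between G and the set of full filters on (W(G), ⊆), with inverse R ↦ the unique element of ⋂R. -/
open Pointwise

/-- `R` is a full filter on the poset of left cosets of subgroups in `S` (with `∅`
excluded): every element of `R` is such a coset, `R` is downward directed and upward
closed within the coset poset, and `R` contains a left coset and a right coset of every
subgroup in `S`. -/
def IsFullFilter (G : Type*) [Group G] (S : Set (Subgroup G)) (R : Set (Set G)) : Prop :=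
  (∀ A ∈ R, ∃ h : G, ∃ U ∈ S, A = h • (U : Set G)) ∧
  (∀ A ∈ R, ∀ B ∈ R, ∃ C ∈ R, C ⊆ A ∧ C ⊆ B) ∧
  (∀ A ∈ R, ∀ B : Set G, (∃ h : G, ∃ U ∈ S, B = h • (U : Set G)) → A ⊆ B → B ∈ R) ∧
  (∀ U ∈ S, (∃ A ∈ R, ∃ h : G, A = h • (U : Set G)) ∧
    (∃ A ∈ R, ∃ h : G, A = (U : Set G) * {h}))

section Aux

variable {G : Type*} [Group G]

/-- Rebasing a left coset at any of its elements. -/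
lemma coset_rebase {a g : G} {V : Subgroup G} (h : g ∈ a • (V : Set G)) :
    a • (V : Set G) = g • (V : Set G) := by
  obtain ⟨v, hv, rfl⟩ := h
  show a • (V : Set G) = (a * v) • (V : Set G)
  rw [← smul_smul, smul_coe_set hv]

lemma self_mem_coset (g : G) (V : Subgroup G) : g ∈ g • (V : Set G) := by
  rw [Set.mem_smul_set_iff_inv_smul_mem, smul_eq_mul, inv_mul_cancel]
  exact V.one_mem

/-- Membership in a right coset written as `U * {b}`. -/
lemma mem_right_coset_iff {U : Subgroup G} {b y : G} :
    y ∈ (U : Set G) * {b} ↔ y * b⁻¹ ∈ U := by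
  rw [Set.mul_singleton]
  constructor
  · rintro ⟨u, hu, rfl⟩; simpa using hu
  · intro h; exact ⟨y * b⁻¹, h, by group⟩

/-- The conjugate description of a right coset. -/
lemma right_coset_eq_smul (g : G) (U : Subgroup G) :
    (U : Set G) * {g} = g • ((Subgroup.map (MulAut.conj g⁻¹).toMonoidHom U : Subgroup G) : Set G) := by
  ext y
  simp only [Set.mul_singleton, Set.mem_image, Set.mem_smul_set, Subgroup.coe_map,
    MulEquiv.toMonoidHom_eq_coe, MonoidHom.coe_coe, MulAut.conj_apply, inv_inv, smul_eq_mul,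
    SetLike.mem_coe]
  constructor
  · rintro ⟨u, hu, rfl⟩
    exact ⟨g⁻¹ * u * g, ⟨u, hu, rfl⟩, by group⟩
  · rintro ⟨w, ⟨u, hu, rfl⟩, rfl⟩
    exact ⟨u, hu, by group⟩

lemma IsGδ.preimage' {α β : Type*} [TopologicalSpace α] [TopologicalSpace β] {f : α → β}
    (hf : Continuous f) {s : Set β} (hs : IsGδ s) : IsGδ (f ⁻¹' s) := by
  obtain ⟨T, hTo, hTc, rfl⟩ := hs
  rw [Set.preimage_sInter]
  exact IsGδ.biInter hTc fun t ht => ((hTo t ht).preimage hf).isGδ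

end Aux

section Main

variable {G : Type*} [Group G] [TopologicalSpace G] [IsTopologicalGroup G] [PolishSpace G]
variable {S : Set (Subgroup G)}

/-- Separation: an element in every subgroup of a neighbourhood basis is trivial. -/
lemma eq_one_of_forall_mem (hbasis : (nhds (1 : G)).HasBasis (· ∈ S) (fun U => (U : Set G)))
    {y : G} (hy : ∀ U ∈ S, y ∈ U) : y = 1 := by
  by_contra hne
  have h1 : ({y}ᶜ : Set G) ∈ nhds (1 : G) :=
    isOpen_compl_singleton.mem_nhds (by simpa using fun h => hne h.symm)
  obtain ⟨U, hU, hsub⟩ := hbasis.mem_iff.1 h1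
  exact hsub (hy U hU) rfl

/-- each `R_g` is a full filter. -/
lemma isFullFilter_Rg (hopen : ∀ U ∈ S, IsOpen (U : Set G))
    (hbasis : (nhds (1 : G)).HasBasis (· ∈ S) (fun U => (U : Set G)))
    (hconj : ∀ U ∈ S, ∀ g : G, Subgroup.map (MulAut.conj g).toMonoidHom U ∈ S)
    (g : G) : IsFullFilter G S {A : Set G | ∃ U ∈ S, A = g • (U : Set G)} := by
  refine ⟨?_, ?_, ?_, ?_⟩
  · rintro A ⟨U, hU, rfl⟩
    exact ⟨g, U, hU, rfl⟩
  · rintro A ⟨U, hU, rfl⟩ B ⟨V, hV, rfl⟩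
    have hmem : (U : Set G) ∩ (V : Set G) ∈ nhds (1 : G) :=
      Filter.inter_mem ((hopen U hU).mem_nhds U.one_mem) ((hopen V hV).mem_nhds V.one_mem)
    obtain ⟨W, hW, hWsub⟩ := hbasis.mem_iff.1 hmem
    exact ⟨g • (W : Set G), ⟨W, hW, rfl⟩,
      Set.smul_set_mono (hWsub.trans Set.inter_subset_left),
      Set.smul_set_mono (hWsub.trans Set.inter_subset_right)⟩
  · rintro A ⟨U, hU, rfl⟩ B ⟨h, V, hV, rfl⟩ hAB
    have hg : g ∈ h • (V : Set G) := hAB (self_mem_coset g U)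
    exact ⟨V, hV, coset_rebase hg⟩
  · intro U hU
    refine ⟨⟨g • (U : Set G), ⟨U, hU, rfl⟩, g, rfl⟩, ?_⟩
    exact ⟨g • ((Subgroup.map (MulAut.conj g⁻¹).toMonoidHom U : Subgroup G) : Set G),
      ⟨_, hconj U hU g⁻¹, rfl⟩, g, (right_coset_eq_smul g U).symm⟩

/-- Injectivity of `g ↦ R_g`. -/
lemma Rg_injective (hbasis : (nhds (1 : G)).HasBasis (· ∈ S) (fun U => (U : Set G))) :
    Function.Injective (fun g : G => {A : Set G | ∃ U ∈ S, A = g • (U : Set G)}) := by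
  intro g h hgh
  have hgh' : {A : Set G | ∃ U ∈ S, A = g • (U : Set G)}
      = {A : Set G | ∃ U ∈ S, A = h • (U : Set G)} := hgh
  have key : ∀ U ∈ S, g⁻¹ * h ∈ U := by
    intro U hU
    have hmem : (g • (U : Set G)) ∈ {A : Set G | ∃ V ∈ S, A = h • (V : Set G)} := by
      rw [← hgh']; exact ⟨U, hU, rfl⟩
    obtain ⟨V, hV, hV2⟩ := hmem
    have : h ∈ g • (U : Set G) := hV2 ▸ self_mem_coset h V
    rwa [Set.mem_smul_set_iff_inv_smul_mem, smul_eq_mul] at this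
  exact inv_mul_eq_one.1 (eq_one_of_forall_mem hbasis key)

/-- The key surjectivity/completeness lemma: every full filter has a point in all
of its members. -/
lemma exists_point (hcount : S.Countable)
    (hopen : ∀ U ∈ S, IsOpen (U : Set G))
    (hbasis : (nhds (1 : G)).HasBasis (· ∈ S) (fun U => (U : Set G)))
    (hconj : ∀ U ∈ S, ∀ g : G, Subgroup.map (MulAut.conj g).toMonoidHom U ∈ S)
    (R : Set (Set G)) (hR : IsFullFilter G S R) :
    ∃ z : G, ∀ A ∈ R, z ∈ A := by
  obtain ⟨hR1, hR2, _hR3, hR4⟩ := hR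
  -- S is nonempty
  obtain ⟨U₀, hU₀⟩ : ∃ U, U ∈ S := by
    obtain ⟨U, hU, -⟩ := hbasis.mem_iff.1 (Filter.univ_mem : Set.univ ∈ nhds (1 : G))
    exact ⟨U, hU⟩
  -- enumerate S
  obtain ⟨fS, hfS⟩ := hcount.exists_eq_range ⟨U₀, hU₀⟩
  have hfSmem : ∀ n, fS n ∈ S := fun n => hfS ▸ Set.mem_range_self n
  -- R is nonempty
  obtain ⟨A₀, hA₀, -⟩ := (hR4 U₀ hU₀).1
  -- every element of R is nonempty
  have hRne : ∀ A ∈ R, A.Nonempty := by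
    intro A hA
    obtain ⟨a, V, hV, rfl⟩ := hR1 A hA
    exact ⟨a, self_mem_coset a V⟩
  -- R is countable
  have hRc : R.Countable := by
    choose! cb cU hcUS hre using hR1
    apply Set.countable_of_injective_of_countable_image (f := cU)
    · intro A hA B hB hUeq
      obtain ⟨C, hC, hCA, hCB⟩ := hR2 A hA B hB
      obtain ⟨c, hc⟩ := hRne C hC
      have hCA' : c ∈ cb A • ((cU A : Subgroup G) : Set G) := by
        rw [← hre A hA]; exact hCA hc
      have hCB' : c ∈ cb B • ((cU B : Subgroup G) : Set G) := by
        rw [← hre B hB]; exact hCB hc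
      have h1 : A = c • ((cU A : Subgroup G) : Set G) :=
        (hre A hA).trans (coset_rebase hCA')
      have h2 : B = c • ((cU B : Subgroup G) : Set G) :=
        (hre B hB).trans (coset_rebase hCB')
      rw [h1, h2, hUeq]
    · exact hcount.mono (by rintro _ ⟨A, hA, rfl⟩; exact hcUS A hA)
  obtain ⟨e, he⟩ := hRc.exists_eq_range ⟨A₀, hA₀⟩
  have heR : ∀ n, e n ∈ R := fun n => he ▸ Set.mem_range_self n
  -- the invariant for the recursive construction
  set P : Subgroup G → Set G → Prop := fun U B =>
    U ∈ S ∧ B ∈ R ∧ (∃ a : G, B ⊆ a • (U : Set G)) ∧ (∃ b : G, B ⊆ (U : Set G) * {b}) with hPdef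
  have refine_coset : ∀ (U' : Subgroup G), U' ∈ S → ∀ B, B ∈ R →
      ∃ B', P U' B' ∧ B' ⊆ B := by
    intro U' hU'S B hBR
    obtain ⟨AL, hAL, a, hALeq⟩ := (hR4 U' hU'S).1
    obtain ⟨AR, hAR, b, hAReq⟩ := (hR4 U' hU'S).2
    obtain ⟨C₁, hC₁, hC₁B, hC₁L⟩ := hR2 B hBR AL hAL
    obtain ⟨C₂, hC₂, hC₂1, hC₂R⟩ := hR2 C₁ hC₁ AR hAR
    refine ⟨C₂, ⟨hU'S, hC₂, ⟨a, ?_⟩, ⟨b, ?_⟩⟩, hC₂1.trans hC₁B⟩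
    · rw [← hALeq]; exact hC₂1.trans hC₁L
    · rw [← hAReq]; exact hC₂R
  have base : ∃ p : Subgroup G × Set G, P p.1 p.2 := by
    obtain ⟨B', hB', -⟩ := refine_coset U₀ hU₀ A₀ hA₀
    exact ⟨(U₀, B'), hB'⟩
  have step : ∀ (n : ℕ) (p : Subgroup G × Set G), P p.1 p.2 →
      ∃ q : Subgroup G × Set G, P q.1 q.2 ∧ (q.1 : Set G) ⊆ (p.1 : Set G) ∧
        (q.1 : Set G) ⊆ (fS n : Set G) ∧ q.2 ⊆ p.2 ∧ q.2 ⊆ e n := by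
    rintro n ⟨U, B⟩ hP
    have hUS := hP.1
    have hmem : (U : Set G) ∩ (fS n : Set G) ∈ nhds (1 : G) :=
      Filter.inter_mem ((hopen U hUS).mem_nhds U.one_mem)
        ((hopen _ (hfSmem n)).mem_nhds (fS n).one_mem)
    obtain ⟨U', hU'S, hU'sub⟩ := hbasis.mem_iff.1 hmem
    obtain ⟨C₁, hC₁, hC₁B⟩ := hR2 B hP.2.1 (e n) (heR n)
    obtain ⟨B', hB'P, hB'C⟩ := refine_coset U' hU'S C₁ hC₁
    exact ⟨(U', B'), hB'P, hU'sub.trans Set.inter_subset_left,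
      hU'sub.trans Set.inter_subset_right, hB'C.trans hC₁B.1, hB'C.trans hC₁B.2⟩
  -- build the sequences
  set T := {p : Subgroup G × Set G // P p.1 p.2} with hTdef
  obtain ⟨p₀⟩ : Nonempty T := ⟨⟨base.choose, base.choose_spec⟩⟩
  set stepT : ℕ → T → T := fun n p =>
    ⟨(step n p.1 p.2).choose, (step n p.1 p.2).choose_spec.1⟩ with hstepT
  obtain ⟨seq, hseq0, hseqS⟩ : ∃ seq : ℕ → T, seq 0 = p₀ ∧ ∀ n, seq (n + 1) = stepT n (seq n) :=
    ⟨fun n => Nat.rec p₀ stepT n, rfl, fun n => rfl⟩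
  set U : ℕ → Subgroup G := fun n => (seq n).1.1 with hUdef
  set B : ℕ → Set G := fun n => (seq n).1.2 with hBdef
  have hP' : ∀ n, P (U n) (B n) := fun n => (seq n).2
  have hrel : ∀ n, (U (n + 1) : Set G) ⊆ (U n : Set G) ∧
      (U (n + 1) : Set G) ⊆ (fS n : Set G) ∧ B (n + 1) ⊆ B n ∧ B (n + 1) ⊆ e n := by
    intro n
    have h1 := (step n (seq n).1 (seq n).2).choose_spec
    have h2 : seq (n + 1) = stepT n (seq n) := hseqS n
    have h3 : (seq (n + 1)).1 = (step n (seq n).1 (seq n).2).choose := by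
      rw [h2]
    constructor
    · show ((seq (n+1)).1.1 : Set G) ⊆ _
      rw [h3]; exact h1.2.1
    constructor
    · show ((seq (n+1)).1.1 : Set G) ⊆ _
      rw [h3]; exact h1.2.2.1
    constructor
    · show (seq (n+1)).1.2 ⊆ _
      rw [h3]; exact h1.2.2.2.1
    · show (seq (n+1)).1.2 ⊆ _
      rw [h3]; exact h1.2.2.2.2
  have hUmono : ∀ {n m : ℕ}, n ≤ m → (U m : Set G) ⊆ (U n : Set G) := by
    intro n m hnm
    induction m, hnm using Nat.le_induction with
    | base => exact subset_rfl
    | succ m hnm ih => exact ((hrel m).1).trans ih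
  have hBmono : ∀ {n m : ℕ}, n ≤ m → B m ⊆ B n := by
    intro n m hnm
    induction m, hnm using Nat.le_induction with
    | base => exact subset_rfl
    | succ m hnm ih => exact ((hrel m).2.2.1).trans ih
  have hUcof : ∀ V ∈ nhds (1 : G), ∃ n, (U n : Set G) ⊆ V := by
    intro V hV
    obtain ⟨W, hWS, hWV⟩ := hbasis.mem_iff.1 hV
    have : W ∈ Set.range fS := hfS ▸ hWS
    obtain ⟨k, rfl⟩ := this
    exact ⟨k + 1, ((hrel k).2.1).trans hWV⟩
  -- the points
  have hBne : ∀ n, (B n).Nonempty := fun n => hRne _ (hP' n).2.1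
  set x : ℕ → G := fun n => (hBne n).choose with hxdef
  have hxB : ∀ n, x n ∈ B n := fun n => (hBne n).choose_spec
  -- two-sided Cauchy conditions
  have pairL : ∀ {n m m' : ℕ}, n ≤ m → n ≤ m' → (x m)⁻¹ * x m' ∈ U n := by
    intro n m m' hm hm'
    obtain ⟨a, ha⟩ := (hP' n).2.2.1
    obtain ⟨u, hu, hxu⟩ := ha (hBmono hm (hxB m))
    obtain ⟨v, hv, hxv⟩ := ha (hBmono hm' (hxB m'))
    have : (x m)⁻¹ * x m' = u⁻¹ * v := by
      rw [← hxu, ← hxv]; show (a * u)⁻¹ * (a * v) = u⁻¹ * v; group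
    rw [this]; exact mul_mem (inv_mem hu) hv
  have pairR : ∀ {n m m' : ℕ}, n ≤ m → n ≤ m' → x m * (x m')⁻¹ ∈ U n := by
    intro n m m' hm hm'
    obtain ⟨b, hb⟩ := (hP' n).2.2.2
    have h1 := mem_right_coset_iff.1 (hb (hBmono hm (hxB m)))
    have h2 := mem_right_coset_iff.1 (hb (hBmono hm' (hxB m')))
    have : x m * (x m')⁻¹ = (x m * b⁻¹) * (x m' * b⁻¹)⁻¹ := by group
    rw [this]; exact mul_mem h1 (inv_mem h2)
  -- conjugation smallness
  have conjU : ∀ (g : G) (n : ℕ), ∃ M, ∀ u ∈ U M, g⁻¹ * u * g ∈ U n := by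
    intro g n
    have hcont : Continuous fun u : G => g⁻¹ * u * g :=
      (continuous_const.mul continuous_id).mul continuous_const
    have hpre : ((fun u : G => g⁻¹ * u * g) ⁻¹' (U n : Set G)) ∈ nhds (1 : G) := by
      apply (IsOpen.preimage hcont (hopen _ (hP' n).1)).mem_nhds
      simp only [Set.mem_preimage, mul_one, inv_mul_cancel, SetLike.mem_coe]
      exact (U n).one_mem
    obtain ⟨M, hM⟩ := hUcof _ hpre
    exact ⟨M, fun u hu => hM hu⟩
  -- quotient spaces are countable, discrete, Polish
  obtain ⟨D, hDc, hDd⟩ := TopologicalSpace.exists_countable_dense G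
  have hQcount : ∀ n, Countable (G ⧸ U n) := by
    intro n
    haveI := hDc.to_subtype
    have hsurj : Function.Surjective (fun d : D => (QuotientGroup.mk d : G ⧸ U n)) := by
      intro q
      obtain ⟨g, rfl⟩ := QuotientGroup.mk_surjective q
      have hne : (g • ((U n : Subgroup G) : Set G)).Nonempty := ⟨g, self_mem_coset g (U n)⟩
      obtain ⟨d, hdD, hdC⟩ := hDd.exists_mem_open ((hopen _ (hP' n).1).smul g) hne
      refine ⟨⟨d, hdD⟩, ?_⟩
      show (QuotientGroup.mk d : G ⧸ U n) = QuotientGroup.mk g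
      apply (QuotientGroup.eq).2
      rw [Set.mem_smul_set_iff_inv_smul_mem, smul_eq_mul] at hdC
      have := inv_mem hdC
      rwa [mul_inv_rev, inv_inv] at this
    exact hsurj.countable
  have hQdisc : ∀ n, DiscreteTopology (G ⧸ U n) := by
    intro n
    apply discreteTopology_iff_isOpen_singleton.2
    intro q
    obtain ⟨g, rfl⟩ := QuotientGroup.mk_surjective q
    rw [← (QuotientGroup.isQuotientMap_mk (U n)).isOpen_preimage]
    have hpre : QuotientGroup.mk ⁻¹' {(QuotientGroup.mk g : G ⧸ U n)}
        = g • ((U n : Subgroup G) : Set G) := by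
      ext y
      simp only [Set.mem_preimage, Set.mem_singleton_iff,
        Set.mem_smul_set_iff_inv_smul_mem, smul_eq_mul, SetLike.mem_coe]
      rw [QuotientGroup.eq]
      constructor
      · intro h
        have := inv_mem h
        rwa [mul_inv_rev, inv_inv] at this
      · intro h
        have := inv_mem h
        rwa [mul_inv_rev, inv_inv] at this
    rw [hpre]
    exact (hopen _ (hP' n).1).smul g
  haveI hQpol : ∀ n, PolishSpace (G ⧸ U n) := by
    intro n
    haveI := hQcount n; haveI := hQdisc n
    infer_instance
  -- the inverse-limit space
  set ι : G → ∀ n, G ⧸ U n := fun g n => (QuotientGroup.mk g : G ⧸ U n) with hιdef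
  set X : Set (∀ n, G ⧸ U n) := closure (Set.range ι) with hXdef
  have hmatch : ∀ c ∈ X, ∀ I : Finset ℕ, ∃ g : G, ∀ i ∈ I, ι g i = c i := by
    intro c hc I
    have hO : IsOpen {y : ∀ n, G ⧸ U n | ∀ i ∈ I, y i = c i} := by
      have heq : {y : ∀ n, G ⧸ U n | ∀ i ∈ I, y i = c i}
          = ⋂ i ∈ I, (fun y : ∀ n, G ⧸ U n => y i) ⁻¹' {c i} := by
        ext y; simp
      rw [heq]
      exact isOpen_biInter_finset fun i _ =>
        (continuous_apply i).isOpen_preimage _ (by haveI := hQdisc i; exact isOpen_discrete _)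
    obtain ⟨y, hyO, g, rfl⟩ := mem_closure_iff.1 hc _ hO (fun i _ => rfl)
    exact ⟨g, hyO⟩
  -- stabilization of the translated threads
  have StabL : ∀ (n : ℕ) (q : G ⧸ U n), ∃ M, ∀ m, M ≤ m → x m • q = x M • q := by
    intro n q
    obtain ⟨g, rfl⟩ := QuotientGroup.mk_surjective q
    obtain ⟨M, hM⟩ := conjU g n
    refine ⟨M, fun m hm => ?_⟩
    rw [MulAction.Quotient.smul_mk, MulAction.Quotient.smul_mk]
    apply (QuotientGroup.eq).2
    have hu : (x m)⁻¹ * x M ∈ U M := pairL hm le_rfl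
    have hmem := hM _ hu
    have heq : (x m • g)⁻¹ * (x M • g) = g⁻¹ * ((x m)⁻¹ * x M) * g := by
      show (x m * g)⁻¹ * (x M * g) = _
      group
    rw [heq]; exact hmem
  have StabR : ∀ (n : ℕ) (q : G ⧸ U n), ∃ M, ∀ m, M ≤ m → (x m)⁻¹ • q = (x M)⁻¹ • q := by
    intro n q
    obtain ⟨g, rfl⟩ := QuotientGroup.mk_surjective q
    obtain ⟨M, hM⟩ := conjU g n
    refine ⟨M, fun m hm => ?_⟩
    rw [MulAction.Quotient.smul_mk, MulAction.Quotient.smul_mk]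
    apply (QuotientGroup.eq).2
    have hu : x m * (x M)⁻¹ ∈ U M := pairR hm le_rfl
    have hmem := hM _ hu
    have heq : ((x m)⁻¹ • g)⁻¹ * ((x M)⁻¹ • g) = g⁻¹ * (x m * (x M)⁻¹) * g := by
      show ((x m)⁻¹ * g)⁻¹ * ((x M)⁻¹ * g) = _
      group
    rw [heq]; exact hmem
  -- the eventual-translation maps
  obtain ⟨f, hf⟩ : ∃ f : ∀ n, G ⧸ U n → G ⧸ U n,
      ∀ (n) (q : G ⧸ U n), ∃ M, ∀ m, M ≤ m → f n q = x m • q :=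
    ⟨fun n q => x ((StabL n q).choose) • q,
      fun n q => ⟨(StabL n q).choose,
        fun m hm => ((StabL n q).choose_spec m hm).symm⟩⟩
  obtain ⟨f', hf'⟩ : ∃ f' : ∀ n, G ⧸ U n → G ⧸ U n,
      ∀ (n) (q : G ⧸ U n), ∃ M, ∀ m, M ≤ m → f' n q = (x m)⁻¹ • q :=
    ⟨fun n q => (x ((StabR n q).choose))⁻¹ • q,
      fun n q => ⟨(StabR n q).choose,
        fun m hm => ((StabR n q).choose_spec m hm).symm⟩⟩
  set φ : (∀ n, G ⧸ U n) → ∀ n, G ⧸ U n := fun c n => f n (c n) with hφdef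
  set ψ : (∀ n, G ⧸ U n) → ∀ n, G ⧸ U n := fun c n => f' n (c n) with hψdef
  have hφcont : Continuous φ := continuous_pi fun n => by
    haveI := hQdisc n
    exact (continuous_of_discreteTopology (f := f n)).comp (continuous_apply n)
  have hψcont : Continuous ψ := continuous_pi fun n => by
    haveI := hQdisc n
    exact (continuous_of_discreteTopology (f := f' n)).comp (continuous_apply n)
  -- f and f' are mutually inverse
  have hinv1 : ∀ (n) (q : G ⧸ U n), f' n (f n q) = q := by
    intro n q
    obtain ⟨M₁, h1⟩ := hf n q
    obtain ⟨M₂, h2⟩ := hf' n (f n q)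
    calc f' n (f n q) = (x (max M₁ M₂))⁻¹ • f n q := h2 _ (le_max_right _ _)
      _ = (x (max M₁ M₂))⁻¹ • (x (max M₁ M₂)) • q := by rw [← h1 _ (le_max_left _ _)]
      _ = q := inv_smul_smul _ _
  have hinv2 : ∀ (n) (q : G ⧸ U n), f n (f' n q) = q := by
    intro n q
    obtain ⟨M₁, h1⟩ := hf' n q
    obtain ⟨M₂, h2⟩ := hf n (f' n q)
    calc f n (f' n q) = (x (max M₁ M₂)) • f' n q := h2 _ (le_max_right _ _)
      _ = (x (max M₁ M₂)) • (x (max M₁ M₂))⁻¹ • q := by rw [← h1 _ (le_max_left _ _)]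
      _ = q := smul_inv_smul _ _
  -- φ and ψ preserve X
  have hφX : ∀ c ∈ X, φ c ∈ X := by
    intro c hc
    rw [hXdef, mem_closure_iff]
    intro o ho hoc
    obtain ⟨I, u, hu, hsub⟩ := isOpen_pi_iff.1 ho _ hoc
    obtain ⟨g, hg⟩ := hmatch c hc I
    choose Mf hMf using fun i => hf i (c i)
    set m := I.sup Mf with hmdef
    refine ⟨ι (x m * g), hsub ?_, Set.mem_range_self _⟩
    intro i hi
    have h1 : ι (x m * g) i = φ c i := by
      show (QuotientGroup.mk (x m * g) : G ⧸ U i) = f i (c i)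
      rw [hMf i m (Finset.le_sup hi), ← hg i hi]
      show QuotientGroup.mk (x m * g) = x m • (QuotientGroup.mk g : G ⧸ U i)
      rw [MulAction.Quotient.smul_mk]
      rfl
    rw [h1]
    exact (hu i hi).2
  have hψX : ∀ c ∈ X, ψ c ∈ X := by
    intro c hc
    rw [hXdef, mem_closure_iff]
    intro o ho hoc
    obtain ⟨I, u, hu, hsub⟩ := isOpen_pi_iff.1 ho _ hoc
    obtain ⟨g, hg⟩ := hmatch c hc I
    choose Mf hMf using fun i => hf' i (c i)
    set m := I.sup Mf with hmdef
    refine ⟨ι ((x m)⁻¹ * g), hsub ?_, Set.mem_range_self _⟩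
    intro i hi
    have h1 : ι ((x m)⁻¹ * g) i = ψ c i := by
      show (QuotientGroup.mk ((x m)⁻¹ * g) : G ⧸ U i) = f' i (c i)
      rw [hMf i m (Finset.le_sup hi), ← hg i hi]
      show QuotientGroup.mk ((x m)⁻¹ * g) = (x m)⁻¹ • (QuotientGroup.mk g : G ⧸ U i)
      rw [MulAction.Quotient.smul_mk]
      rfl
    rw [h1]
    exact (hu i hi).2
  -- a complete metric on G
  letI mG := TopologicalSpace.upgradeIsCompletelyMetrizable G
  -- the set of threads with arbitrarily small coordinates
  set W : Set (∀ n, G ⧸ U n) := ⋂ k : ℕ, ⋃ n : ℕ,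
    {c : ∀ n', G ⧸ U n' | ∀ y z : G, (QuotientGroup.mk y : G ⧸ U n) = c n →
      (QuotientGroup.mk z : G ⧸ U n) = c n → dist y z ≤ 1 / (k + 1)} with hWdef
  have hWGδ : IsGδ W := by
    apply IsGδ.iInter
    intro k
    apply IsOpen.isGδ
    apply isOpen_iUnion
    intro n
    show IsOpen ((fun c : ∀ n', G ⧸ U n' => c n) ⁻¹'
      {q : G ⧸ U n | ∀ y z : G, (QuotientGroup.mk y : G ⧸ U n) = q →
        (QuotientGroup.mk z : G ⧸ U n) = q → dist y z ≤ 1 / (k + 1)})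
    exact (continuous_apply n).isOpen_preimage _ (by haveI := hQdisc n; exact isOpen_discrete _)
  have hιW : ∀ g : G, ι g ∈ W := by
    intro g
    refine Set.mem_iInter.2 fun k => ?_
    have hball : {u : G | dist (g * u) g < 1 / (k + 1) / 2} ∈ nhds (1 : G) := by
      have hcont : Continuous fun u : G => dist (g * u) g :=
        Continuous.dist (continuous_mul_left g) continuous_const
      have hop : IsOpen {u : G | dist (g * u) g < 1 / (k + 1) / 2} :=
        isOpen_lt hcont continuous_const
      apply hop.mem_nhds
      simp only [Set.mem_setOf_eq, mul_one, dist_self]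
      positivity
    obtain ⟨n, hn⟩ := hUcof _ hball
    refine Set.mem_iUnion.2 ⟨n, ?_⟩
    intro y z hy hz
    have hy' : g⁻¹ * y ∈ U n := by
      have := inv_mem ((QuotientGroup.eq).1 hy)
      rwa [mul_inv_rev, inv_inv] at this
    have hz' : g⁻¹ * z ∈ U n := by
      have := inv_mem ((QuotientGroup.eq).1 hz)
      rwa [mul_inv_rev, inv_inv] at this
    have h1 : dist y g < 1 / (k + 1) / 2 := by
      have := hn hy'
      simp only [Set.mem_setOf_eq] at this
      rwa [mul_inv_cancel_left] at this
    have h2 : dist z g < 1 / (k + 1) / 2 := by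
      have := hn hz'
      simp only [Set.mem_setOf_eq] at this
      rwa [mul_inv_cancel_left] at this
    calc dist y z ≤ dist y g + dist g z := dist_triangle y g z
      _ = dist y g + dist z g := by rw [dist_comm g z]
      _ ≤ 1 / (k + 1) / 2 + 1 / (k + 1) / 2 := add_le_add h1.le h2.le
      _ = 1 / (k + 1) := by ring
  -- small threads in X converge
  have hWX : ∀ c ∈ X, c ∈ W → ∃ g : G, ι g = c := by
    intro c hcX hcW
    set K : ℕ → Set G := fun n => {y : G | (QuotientGroup.mk y : G ⧸ U n) = c n} with hKdef
    have hKcl : ∀ n, IsClosed (K n) := by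
      intro n
      haveI := hQdisc n
      exact IsClosed.preimage (QuotientGroup.continuous_mk (N := U n)) (isClosed_discrete ({c n} : Set (G ⧸ U n)))
    have hKne : ∀ n, (K n).Nonempty := by
      intro n
      obtain ⟨g, hg⟩ := hmatch c hcX {n}
      exact ⟨g, hg n (Finset.mem_singleton_self n)⟩
    have hKsucc : ∀ n, K (n + 1) ⊆ K n := by
      intro n y hy
      obtain ⟨g, hg⟩ := hmatch c hcX {n, n + 1}
      have hgn : ι g n = c n := hg n (by simp)
      have hgn1 : ι g (n + 1) = c (n + 1) := hg (n + 1) (by simp)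
      have h1 : (QuotientGroup.mk y : G ⧸ U (n + 1)) = QuotientGroup.mk g := by
        rw [hy]; exact hgn1.symm
      have h2 : y⁻¹ * g ∈ U (n + 1) := (QuotientGroup.eq).1 h1
      have h3 : y⁻¹ * g ∈ U n := (hrel n).1 h2
      show (QuotientGroup.mk y : G ⧸ U n) = c n
      rw [← hgn]
      exact (QuotientGroup.eq).2 h3
    have hKmono : ∀ {n m : ℕ}, n ≤ m → K m ⊆ K n := by
      intro n m hnm
      induction m, hnm using Nat.le_induction with
      | base => exact subset_rfl
      | succ m hnm ih => exact (hKsucc m).trans ih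
    set yseq : ℕ → G := fun n => (hKne n).choose with hyseqdef
    have hyK : ∀ n, yseq n ∈ K n := fun n => (hKne n).choose_spec
    have hcauchy : CauchySeq yseq := by
      rw [Metric.cauchySeq_iff]
      intro ε hε
      obtain ⟨k, hk⟩ := exists_nat_one_div_lt hε
      have := Set.mem_iInter.1 hcW k
      obtain ⟨n, hn⟩ := Set.mem_iUnion.1 this
      refine ⟨n, fun a ha b hb => ?_⟩
      have hya : yseq a ∈ K n := hKmono ha (hyK a)
      have hyb : yseq b ∈ K n := hKmono hb (hyK b)
      calc dist (yseq a) (yseq b) ≤ 1 / (k + 1) := hn _ _ hya hyb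
        _ < ε := hk
    obtain ⟨g, hg⟩ := cauchySeq_tendsto_of_complete hcauchy
    refine ⟨g, funext fun n => ?_⟩
    have : g ∈ K n := by
      apply (hKcl n).mem_of_tendsto hg
      filter_upwards [Filter.eventually_ge_atTop n] with m hm
      exact hKmono hm (hyK m)
    exact this
  -- Baire category on X
  have hXcl : IsClosed X := hXdef ▸ isClosed_closure
  haveI hXpol : PolishSpace X := hXcl.polishSpace
  letI mX := TopologicalSpace.upgradeIsCompletelyMetrizable X
  haveI : Nonempty X := ⟨⟨ι 1, hXdef ▸ subset_closure (Set.mem_range_self 1)⟩⟩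
  set A₁ : Set X := Subtype.val ⁻¹' W with hA₁def
  have hA₁Gδ : IsGδ A₁ := hWGδ.preimage' continuous_subtype_val
  have hdense₁ : Dense A₁ := by
    have hd : Dense {p : X | (p : ∀ n, G ⧸ U n) ∈ Set.range ι} := by
      intro p
      rw [mem_closure_iff]
      intro o ho hpo
      obtain ⟨O, hO, rfl⟩ := isOpen_induced_iff.1 ho
      have hp2 : (p : ∀ n, G ⧸ U n) ∈ closure (Set.range ι) := hXdef ▸ p.2
      obtain ⟨y, hyO, g, rfl⟩ := mem_closure_iff.1 hp2 O hO hpo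
      exact ⟨⟨ι g, hXdef ▸ subset_closure (Set.mem_range_self g)⟩, hyO, Set.mem_range_self g⟩
    apply Dense.mono ?_ hd
    rintro p ⟨g, hg⟩
    show (p : ∀ n, G ⧸ U n) ∈ W
    rw [← hg]
    exact hιW g
  set φX : X → X := fun c => ⟨φ c.1, hφX c.1 c.2⟩ with hφXdef
  set ψX : X → X := fun c => ⟨ψ c.1, hψX c.1 c.2⟩ with hψXdef
  have hφXcont : Continuous φX := (hφcont.comp continuous_subtype_val).subtype_mk _
  have hψXcont : Continuous ψX := (hψcont.comp continuous_subtype_val).subtype_mk _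
  have hinvX1 : ∀ c : X, ψX (φX c) = c := by
    intro c
    apply Subtype.ext
    funext n
    exact hinv1 n (c.1 n)
  have hinvX2 : ∀ c : X, φX (ψX c) = c := by
    intro c
    apply Subtype.ext
    funext n
    exact hinv2 n (c.1 n)
  set A₂ : Set X := φX ⁻¹' A₁ with hA₂def
  have hA₂Gδ : IsGδ A₂ := hA₁Gδ.preimage' hφXcont
  have hdense₂ : Dense A₂ := by
    rw [dense_iff_inter_open]
    intro o ho hone
    obtain ⟨c, hco⟩ := hone
    have hpre : IsOpen (ψX ⁻¹' o) := ho.preimage hψXcont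
    have hprene : (ψX ⁻¹' o).Nonempty :=
      ⟨φX c, by rw [Set.mem_preimage, hinvX1]; exact hco⟩
    obtain ⟨a, hao, haA⟩ := dense_iff_inter_open.1 hdense₁ _ hpre hprene
    refine ⟨ψX a, hao, ?_⟩
    show φX (ψX a) ∈ A₁
    rw [hinvX2]
    exact haA
  obtain ⟨p, hp1, hp2⟩ := (Dense.inter_of_Gδ hA₁Gδ hA₂Gδ hdense₁ hdense₂).nonempty
  obtain ⟨g, hg⟩ := hWX p.1 p.2 hp1
  have hφpX : φ p.1 ∈ X := hφX p.1 p.2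
  have hφpW : (φ p.1) ∈ W := hp2
  obtain ⟨h, hh⟩ := hWX (φ p.1) hφpX hφpW
  -- the limit point
  set z := h * g⁻¹ with hzdef
  have key : ∀ n : ℕ, ∃ M, ∀ m, M ≤ m →
      (QuotientGroup.mk (x m * g) : G ⧸ U n) = QuotientGroup.mk h := by
    intro n
    obtain ⟨M, hM⟩ := hf n (p.1 n)
    refine ⟨M, fun m hm => ?_⟩
    have h1 : φ p.1 n = x m • p.1 n := hM m hm
    have h2 : p.1 n = (QuotientGroup.mk g : G ⧸ U n) := by rw [← hg]
    have h3 : φ p.1 n = (QuotientGroup.mk h : G ⧸ U n) := by rw [← hh]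
    rw [h2] at h1
    rw [h1, MulAction.Quotient.smul_mk] at h3
    exact h3
  have hconv : Filter.Tendsto x Filter.atTop (nhds z) := by
    rw [tendsto_atTop_nhds]
    intro O hzO hO
    have hcont : Continuous fun u : G => (h * u⁻¹ * h⁻¹) * z :=
      ((continuous_const.mul continuous_inv).mul continuous_const).mul continuous_const
    have hpre : {u : G | (h * u⁻¹ * h⁻¹) * z ∈ O} ∈ nhds (1 : G) := by
      apply (hO.preimage hcont).mem_nhds
      show (h * (1 : G)⁻¹ * h⁻¹) * z ∈ O
      simpa using hzO
    obtain ⟨n, hn⟩ := hUcof _ hpre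
    obtain ⟨M, hM⟩ := key n
    refine ⟨M, fun m hm => ?_⟩
    have hu : (x m * g)⁻¹ * h ∈ U n := (QuotientGroup.eq).1 (hM m hm)
    have hxm : x m = (h * ((x m * g)⁻¹ * h)⁻¹ * h⁻¹) * z := by rw [hzdef]; group
    rw [hxm]
    exact hn hu
  refine ⟨z, ?_⟩
  intro A hA
  have hAr : A ∈ Set.range e := he ▸ hA
  obtain ⟨k, rfl⟩ := hAr
  have hBcl : IsClosed (B (k + 1)) := by
    obtain ⟨a, V, hVS, hBeq⟩ := hR1 _ (hP' (k + 1)).2.1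
    rw [hBeq]
    exact (V.isClosed_of_isOpen (hopen V hVS)).smul a
  have hzB : z ∈ B (k + 1) := by
    apply hBcl.mem_of_tendsto hconv
    filter_upwards [Filter.eventually_ge_atTop (k + 1)] with m hm
    exact hBmono hm (hxB m)
  exact (hrel k).2.2.2 hzB

end Main

/-- For a Polish group `G` with a countable conjugation-invariant neighbourhood basis `S`
of the identity consisting of open subgroups, the map `g ↦ R_g = {gU : U ∈ S}` is a
bijection between `G` and the full filters on the coset poset, with inverse
`R ↦ the unique element of ⋂ R`. -/
theorem stmt10 (G : Type*) [Group G] [TopologicalSpace G] [IsTopologicalGroup G]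
    [PolishSpace G]
    (S : Set (Subgroup G)) (hcount : S.Countable)
    (hopen : ∀ U ∈ S, IsOpen (U : Set G))
    (hbasis : (nhds (1 : G)).HasBasis (· ∈ S) (fun U => (U : Set G)))
    (hconj : ∀ U ∈ S, ∀ g : G, Subgroup.map (MulAut.conj g).toMonoidHom U ∈ S) :
    (∀ g : G, IsFullFilter G S {A : Set G | ∃ U ∈ S, A = g • (U : Set G)}) ∧
    Function.Injective (fun g : G => {A : Set G | ∃ U ∈ S, A = g • (U : Set G)}) ∧
    (∀ R : Set (Set G), IsFullFilter G S R →
      ∃ g : G, R = {A : Set G | ∃ U ∈ S, A = g • (U : Set G)} ∧ ⋂₀ R = {g}) := by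
  refine ⟨isFullFilter_Rg hopen hbasis hconj, Rg_injective hbasis, ?_⟩
  intro R hR
  obtain ⟨z, hz⟩ := exists_point hcount hopen hbasis hconj R hR
  obtain ⟨hR1, hR2, hR3, hR4⟩ := hR
  have hsub1 : R ⊆ {A : Set G | ∃ U ∈ S, A = z • (U : Set G)} := by
    intro A hA
    obtain ⟨a, V, hV, rfl⟩ := hR1 A hA
    exact ⟨V, hV, coset_rebase (hz _ hA)⟩
  have hsub2 : ∀ V ∈ S, z • (V : Set G) ∈ R := by
    intro V hV
    obtain ⟨A, hA, a, hAeq⟩ := (hR4 V hV).1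
    have hzA : z ∈ a • (V : Set G) := by rw [← hAeq]; exact hz A hA
    have hA' : a • (V : Set G) ∈ R := hAeq ▸ hA
    rwa [coset_rebase hzA] at hA'
  refine ⟨z, Set.Subset.antisymm hsub1 ?_, ?_⟩
  · rintro A ⟨V, hV, rfl⟩
    exact hsub2 V hV
  · ext y
    simp only [Set.mem_sInter, Set.mem_singleton_iff]
    constructor
    · intro hy
      have hmem : ∀ V ∈ S, z⁻¹ * y ∈ V := by
        intro V hV
        have := hy _ (hsub2 V hV)
        rwa [Set.mem_smul_set_iff_inv_smul_mem, smul_eq_mul] at this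
      exact (inv_mul_eq_one.1 (eq_one_of_forall_mem hbasis hmem)).symm
    · rintro rfl
      exact fun A hA => hz A hA
end

section
/- Let G be a Polish group with a countable neighbourhood basis S_G of the identity consisting of open subgroups, invariant under Aut(G), and suppose Aut(G) carries a Polish group topology with neighbourhood basis of the identity given by subgroups {Φ ∈ Aut(G) : Φ(A₁)=A₁, …, Φ(Aₙ)=Aₙ} for cosets Aᵢ of subgroups in S_G. Then the natural map Φ : G/Z(G) → Aut(G), sending g to conjugation by g, is continuous and injective; consequently Inn(G) is a Borel subgroup of Aut(G). -/
open Pointwise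

namespace Stmt17Aux

open Pointwise Filter Metric Set Topology
open scoped Classical
set_option linter.unusedSectionVars false

variable {X : Type*} [Group X] [MetricSpace X]

noncomputable def kof (q : ℕ → X) (C : Set X) (ε : ℝ) : ℕ :=
  if h : ∃ k, (C ∩ ball (q k) ε).Nonempty then Nat.find h else 0

theorem kof_spec {q : ℕ → X} {C : Set X} {ε : ℝ} (hq : DenseRange q) (hC : C.Nonempty)
    (hε : 0 < ε) : (C ∩ ball (q (kof q C ε)) ε).Nonempty := by
  obtain ⟨c, hc⟩ := hC
  obtain ⟨k, hk⟩ := Metric.denseRange_iff.1 hq c ε hε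
  have h : ∃ k, (C ∩ ball (q k) ε).Nonempty := ⟨k, c, hc, Metric.mem_ball.2 hk⟩
  rw [kof, dif_pos h]; exact Nat.find_spec h

theorem kof_eq_iff {q : ℕ → X} {C : Set X} {ε : ℝ} {k : ℕ} :
    kof q C ε = k ↔ (((C ∩ ball (q k) ε).Nonempty ∧ ∀ j < k, ¬(C ∩ ball (q j) ε).Nonempty) ∨
      (k = 0 ∧ ∀ j, ¬(C ∩ ball (q j) ε).Nonempty)) := by
  rw [kof]
  split_ifs with h
  · constructor
    · rintro rfl
      exact Or.inl ⟨Nat.find_spec h, fun j hj => Nat.find_min h hj⟩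
    · rintro (⟨h1, h2⟩ | ⟨rfl, h2⟩)
      · exact (Nat.find_eq_iff h).2 ⟨h1, h2⟩
      · exact absurd h (not_exists.2 h2)
  · rw [not_exists] at h
    constructor
    · rintro rfl
      exact Or.inr ⟨rfl, h⟩
    · rintro (⟨h1, _⟩ | ⟨rfl, _⟩)
      · exact absurd h1 (h k)
      · rfl

variable (Z : Subgroup X)

noncomputable def Aset (q : ℕ → X) (x : X) : ℕ → Set X
  | 0 => x • (Z : Set X)
  | n+1 => Aset q x n ∩ ball (q (kof q (Aset q x n) ((1/2 : ℝ)^n))) ((1/2 : ℝ)^n)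

noncomputable def idx (q : ℕ → X) (x : X) (n : ℕ) : ℕ := kof q (Aset Z q x n) ((1/2:ℝ)^n)

noncomputable def gq (q : ℕ → X) (x : X) (n : ℕ) : X := q (idx Z q x n)

noncomputable def sel (q : ℕ → X) (x : X) : X := limUnder atTop (gq Z q x)

variable {q : ℕ → X}

theorem Aset_nonempty (hq : DenseRange q) (x : X) : ∀ n, (Aset Z q x n).Nonempty
  | 0 => ⟨x, Set.mem_smul_set.2 ⟨1, Z.one_mem, by simp⟩⟩
  | n+1 => kof_spec hq (Aset_nonempty hq x n) (by positivity)

theorem Aset_succ_sub (x : X) (n : ℕ) : Aset Z q x (n+1) ⊆ Aset Z q x n := by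
  rw [Aset]; exact inter_subset_left

theorem Aset_sub_ball (x : X) (n : ℕ) :
    Aset Z q x (n+1) ⊆ ball (gq Z q x n) ((1/2:ℝ)^n) := by
  rw [Aset]; exact inter_subset_right

theorem Aset_sub_coset (x : X) : ∀ n, Aset Z q x n ⊆ x • (Z : Set X)
  | 0 => by rw [Aset]
  | n+1 => (Aset_succ_sub Z x n).trans (Aset_sub_coset x n)

theorem dist_gq_le (hq : DenseRange q) (x : X) (n : ℕ) :
    dist (gq Z q x n) (gq Z q x (n+1)) ≤ 2 * (1/2:ℝ)^n := by
  obtain ⟨p, hp⟩ := Aset_nonempty Z hq x (n+2)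
  have h1 : p ∈ ball (gq Z q x (n+1)) ((1/2:ℝ)^(n+1)) := Aset_sub_ball Z x (n+1) hp
  have h2 : p ∈ ball (gq Z q x n) ((1/2:ℝ)^n) :=
    Aset_sub_ball Z x n (Aset_succ_sub Z x (n+1) hp)
  have := dist_triangle (gq Z q x n) p (gq Z q x (n+1))
  rw [Metric.mem_ball, dist_comm] at h1 h2
  have hhalf : ((1:ℝ)/2)^(n+1) ≤ (1/2:ℝ)^n := by
    apply pow_le_pow_of_le_one <;> norm_num
  nlinarith [dist_comm p (gq Z q x (n+1))]

theorem cauchySeq_gq (hq : DenseRange q) (x : X) : CauchySeq (gq Z q x) :=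
  cauchySeq_of_le_geometric (1/2) 2 (by norm_num) (dist_gq_le Z hq x)

variable [CompleteSpace X]

theorem tendsto_gq (hq : DenseRange q) (x : X) :
    Tendsto (gq Z q x) atTop (𝓝 (sel Z q x)) :=
  (cauchySeq_gq Z hq x).tendsto_limUnder

theorem sel_mem (hq : DenseRange q) (x : X) (hcl : IsClosed (x • (Z : Set X))) :
    sel Z q x ∈ x • (Z : Set X) := by
  have hp : ∀ n, (Aset Z q x (n+1)).Nonempty := fun n => Aset_nonempty Z hq x (n+1)
  choose p hp using hp
  have hd : ∀ n, dist (p n) (sel Z q x) ≤ (1/2:ℝ)^n + dist (gq Z q x n) (sel Z q x) := by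
    intro n
    have h1 : dist (p n) (gq Z q x n) < (1/2:ℝ)^n := by
      have := Aset_sub_ball Z x n (hp n); rwa [Metric.mem_ball] at this
    have := dist_triangle (p n) (gq Z q x n) (sel Z q x)
    linarith
  have htp : Tendsto p atTop (𝓝 (sel Z q x)) := by
    rw [tendsto_iff_dist_tendsto_zero]
    apply squeeze_zero (fun n => dist_nonneg) hd
    have h1 : Tendsto (fun n => ((1:ℝ)/2)^n) atTop (𝓝 0) := by
      apply tendsto_pow_atTop_nhds_zero_of_lt_one <;> norm_num
    have h2 : Tendsto (fun n => dist (gq Z q x n) (sel Z q x)) atTop (𝓝 0) :=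
      tendsto_iff_dist_tendsto_zero.1 (tendsto_gq Z hq x)
    simpa using h1.add h2
  exact hcl.mem_of_tendsto htp (Filter.Eventually.of_forall fun n =>
    Aset_sub_coset Z x (n+1) (hp n))

theorem Aset_congr {x y : X} (hxy : y ∈ x • (Z : Set X)) (n : ℕ) :
    Aset Z q y n = Aset Z q x n := by
  induction n with
  | zero =>
    obtain ⟨z, hz, hxz⟩ := Set.mem_smul_set.1 hxy
    rw [Aset, Aset, ← hxz, smul_eq_mul, mul_smul, smul_coe_set hz]
  | succ n ih => rw [Aset, Aset, ih]

theorem sel_congr {x y : X} (hxy : y ∈ x • (Z : Set X)) : sel Z q y = sel Z q x := by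
  have h : gq Z q y = gq Z q x := by
    funext n; rw [gq, gq, idx, idx, Aset_congr Z hxy]
  rw [sel, sel, h]


noncomputable def hist (q : ℕ → X) (x : X) : ℕ → List ℕ
  | 0 => []
  | n+1 => hist q x n ++ [idx Z q x n]

theorem hist_length (x : X) : ∀ n, (hist Z q x n).length = n
  | 0 => rfl
  | n+1 => by rw [hist, List.length_append, hist_length x n]; rfl

noncomputable def Uof (q : ℕ → X) (l : List ℕ) : Set X :=
  ⋂ j ∈ Finset.range l.length, ball (q (l.getD j 0)) ((1/2:ℝ)^j)

theorem Uof_isOpen {l : List ℕ} : IsOpen (Uof q l) :=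
  isOpen_biInter_finset fun j _ => isOpen_ball

theorem Uof_nil : Uof q [] = univ := by simp [Uof]

theorem Uof_append (l : List ℕ) (k : ℕ) :
    Uof q (l ++ [k]) = Uof q l ∩ ball (q k) ((1/2:ℝ)^l.length) := by
  have h1 : ∀ j, ∀ _ : j ∈ Finset.range l.length,
      ball (q ((l ++ [k]).getD j 0)) ((1/2:ℝ)^j) = ball (q (l.getD j 0)) ((1/2:ℝ)^j) := by
    intro j hj
    rw [List.getD_append _ _ _ _ (Finset.mem_range.1 hj)]
  have h2 : (l ++ [k]).getD l.length 0 = k := by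
    rw [List.getD_append_right _ _ _ _ le_rfl]
    simp
  have h3 : (l ++ [k]).length = l.length + 1 := by simp
  rw [Uof, Uof, h3, Finset.range_add_one, Finset.set_biInter_insert, h2, Set.inter_comm]
  congr 1
  exact Set.iInter₂_congr h1

theorem Aset_eq (x : X) : ∀ n, Aset Z q x n = x • (Z : Set X) ∩ Uof q (hist Z q x n)
  | 0 => by rw [Aset, hist, Uof_nil, inter_univ]
  | n+1 => by
    have hidx : idx Z q x n = kof q (x • (Z : Set X) ∩ Uof q (hist Z q x n)) ((1/2:ℝ)^n) := by
      rw [show idx Z q x n = kof q (Aset Z q x n) ((1/2:ℝ)^n) from rfl, Aset_eq x n]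
    rw [Aset, hist, Uof_append, hist_length, hidx, Aset_eq x n, inter_assoc]

variable [MeasurableSpace X]

theorem measurableSet_kof_event
    (hopenW : ∀ W : Set X, IsOpen W → MeasurableSet {x : X | ((x • (Z : Set X)) ∩ W).Nonempty})
    {W : Set X} (hW : IsOpen W) (ε : ℝ) (k : ℕ) :
    MeasurableSet {x : X | kof q (x • (Z : Set X) ∩ W) ε = k} := by
  have hQ : ∀ j : ℕ, MeasurableSet {x : X | ((x • (Z:Set X)) ∩ (W ∩ ball (q j) ε)).Nonempty} :=
    fun j => hopenW _ (hW.inter isOpen_ball)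
  have hset : {x : X | kof q (x • (Z:Set X) ∩ W) ε = k} =
      ({x | ((x • (Z:Set X)) ∩ (W ∩ ball (q k) ε)).Nonempty} ∩
        ⋂ j, ⋂ _ : j < k, {x | ((x • (Z:Set X)) ∩ (W ∩ ball (q j) ε)).Nonempty}ᶜ) ∪
      ({x : X | k = 0} ∩ ⋂ j : ℕ, {x | ((x • (Z:Set X)) ∩ (W ∩ ball (q j) ε)).Nonempty}ᶜ) := by
    ext x
    simp only [kof_eq_iff, inter_assoc, mem_union, mem_inter_iff, mem_iInter, mem_compl_iff,
      mem_setOf_eq]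
  rw [hset]
  refine MeasurableSet.union ((hQ k).inter (MeasurableSet.iInter fun j =>
      MeasurableSet.iInter fun _ => (hQ j).compl)) (MeasurableSet.inter ?_
      (MeasurableSet.iInter fun j => (hQ j).compl))
  rcases k with _ | k
  · simpa using MeasurableSet.univ
  · simpa using MeasurableSet.empty

theorem measurableSet_hist
    (hopenW : ∀ W : Set X, IsOpen W → MeasurableSet {x : X | ((x • (Z : Set X)) ∩ W).Nonempty}) :
    ∀ n (l : List ℕ), MeasurableSet {x : X | hist Z q x n = l} := by
  intro n
  induction n with
  | zero =>
    intro l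
    cases l with
    | nil => simpa [hist] using MeasurableSet.univ
    | cons a l => simpa [hist] using MeasurableSet.empty
  | succ n ih =>
    intro l
    have hset : {x : X | hist Z q x (n+1) = l} =
        ⋃ l' : List ℕ, ⋃ k : ℕ, ⋃ _ : l' ++ [k] = l,
          ({x | hist Z q x n = l'} ∩
            {x | kof q (x • (Z:Set X) ∩ Uof q l') ((1/2:ℝ)^n) = k}) := by
      ext x
      simp only [mem_iUnion, mem_inter_iff, mem_setOf_eq, hist]
      constructor
      · rintro rfl
        refine ⟨hist Z q x n, idx Z q x n, rfl, rfl, ?_⟩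
        rw [← Aset_eq]
        rfl
      · rintro ⟨l', k, hlk, h1, h2⟩
        have hik : idx Z q x n = k := by
          rw [show idx Z q x n = kof q (Aset Z q x n) ((1/2:ℝ)^n) from rfl, Aset_eq, h1]
          exact h2
        rw [h1, hik, hlk]
    rw [hset]
    exact MeasurableSet.iUnion fun l' => MeasurableSet.iUnion fun k =>
      MeasurableSet.iUnion fun _ => (ih l').inter
        (measurableSet_kof_event Z hopenW Uof_isOpen _ k)

theorem measurable_idx
    (hopenW : ∀ W : Set X, IsOpen W → MeasurableSet {x : X | ((x • (Z : Set X)) ∩ W).Nonempty})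
    (n : ℕ) : Measurable fun x => idx Z q x n := by
  apply measurable_to_countable'
  intro k
  have hset : (fun x => idx Z q x n) ⁻¹' {k} =
      ⋃ l' : List ℕ, ({x | hist Z q x n = l'} ∩
        {x | kof q (x • (Z:Set X) ∩ Uof q l') ((1/2:ℝ)^n) = k}) := by
    ext x
    simp only [mem_preimage, mem_singleton_iff, mem_iUnion, mem_inter_iff, mem_setOf_eq]
    constructor
    · intro h
      refine ⟨hist Z q x n, rfl, ?_⟩
      rw [← h, show idx Z q x n = kof q (Aset Z q x n) ((1/2:ℝ)^n) from rfl, Aset_eq]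
    · rintro ⟨l', h1, h2⟩
      rw [show idx Z q x n = kof q (Aset Z q x n) ((1/2:ℝ)^n) from rfl, Aset_eq, h1]
      exact h2
  rw [hset]
  exact MeasurableSet.iUnion fun l' => (measurableSet_hist Z hopenW n l').inter
    (measurableSet_kof_event Z hopenW Uof_isOpen _ k)

theorem measurable_gq
    (hopenW : ∀ W : Set X, IsOpen W → MeasurableSet {x : X | ((x • (Z : Set X)) ∩ W).Nonempty})
    (n : ℕ) : Measurable fun x => gq Z q x n :=
  measurable_from_top.comp (measurable_idx Z hopenW n)

theorem measurable_sel [CompleteSpace X] [BorelSpace X] (hq : DenseRange q)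
    (hopenW : ∀ W : Set X, IsOpen W → MeasurableSet {x : X | ((x • (Z : Set X)) ∩ W).Nonempty}) :
    Measurable (sel Z q) :=
  measurable_of_tendsto_metrizable (fun n => measurable_gq Z hopenW n)
    (tendsto_pi_nhds.2 fun x => tendsto_gq Z hq x)

end Stmt17Aux


/-- The group `Aut(G)` of bi-continuous automorphisms of a topological group `G`,
as a subgroup of `MulAut G`. -/
def contAut (G : Type u) [Group G] [TopologicalSpace G] : Subgroup (MulAut G) where
  carrier := {f : MulAut G | Continuous f ∧ Continuous f.symm}
  one_mem' := ⟨continuous_id, continuous_id⟩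
  mul_mem' := by
    rintro a b ⟨ha1, ha2⟩ ⟨hb1, hb2⟩
    exact ⟨ha1.comp hb1, hb2.comp ha2⟩
  inv_mem' := by
    rintro a ⟨ha1, ha2⟩
    exact ⟨ha2, ha1⟩

/-- The inner automorphism given by conjugation by `g`, as an element of `Aut(G)`. -/
def conjAut (G : Type u) [Group G] [TopologicalSpace G] [IsTopologicalGroup G] (g : G) :
    ↥(contAut G) :=
  ⟨MulAut.conj g,
    (continuous_const.mul continuous_id).mul continuous_const,
    (continuous_const.mul continuous_id).mul continuous_const⟩

/-- Let `G` be a Polish group with a countable conjugation-basis `S` of open subgroups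
invariant under `Aut(G)`, and suppose `Aut(G)` carries a Polish group topology `σ` whose
neighbourhood basis of the identity is given by the stabilisers of finitely many cosets
of subgroups in `S`. Then the natural map `G/Z(G) → Aut(G)` sending `g` to conjugation
by `g` is continuous and injective; consequently `Inn(G)` is a Borel subgroup of
`Aut(G)`. -/
theorem stmt17 (G : Type*) [Group G] [TopologicalSpace G] [IsTopologicalGroup G]
    [PolishSpace G]
    (S : Set (Subgroup G)) (hcount : S.Countable)
    (hopen : ∀ U ∈ S, IsOpen (U : Set G))
    (hbasis : (nhds (1 : G)).HasBasis (· ∈ S) (fun U => (U : Set G)))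
    (hinvar : ∀ U ∈ S, ∀ φ : ↥(contAut G),
      Subgroup.map (φ : MulAut G).toMonoidHom U ∈ S)
    (σ : TopologicalSpace ↥(contAut G))
    (hPolish : @PolishSpace ↥(contAut G) σ)
    (hgrp : @IsTopologicalGroup ↥(contAut G) σ _)
    (hbasisAut : (@nhds _ σ (1 : ↥(contAut G))).HasBasis
      (fun F : Finset (Set G) => ∀ A ∈ F, ∃ g : G, ∃ U ∈ S, A = g • (U : Set G))
      (fun F => {φ : ↥(contAut G) | ∀ A ∈ F, ⇑(φ : MulAut G) '' A = A})) :
    ∃ F : G ⧸ Subgroup.center G → ↥(contAut G),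
      (∀ g : G, F (QuotientGroup.mk g) = conjAut G g) ∧
      @Continuous _ _ _ σ F ∧
      Function.Injective F ∧
      @MeasurableSet ↥(contAut G) (@borel _ σ) (Set.range (conjAut G)) := by
  classical
  letI := σ
  haveI := hPolish
  haveI := hgrp
  -- basic conjugation facts
  have hconj_one : ∀ z ∈ Subgroup.center G, MulAut.conj z = (1 : MulAut G) := by
    intro z hz
    ext t
    have h := (Subgroup.mem_center_iff.1 hz) t
    show z * t * z⁻¹ = t
    rw [mul_inv_eq_iff_eq_mul]
    exact h.symm
  have hcenter_of_conj : ∀ a : G, MulAut.conj a = (1 : MulAut G) → a ∈ Subgroup.center G := by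
    intro a ha
    refine Subgroup.mem_center_iff.2 fun t => ?_
    have ht := DFunLike.congr_fun ha t
    have ht' : a * t * a⁻¹ = t := ht
    have : a * t = t * a := by rwa [mul_inv_eq_iff_eq_mul] at ht'
    exact this.symm
  -- the homomorphism
  have hconjmem : ∀ g : G, MulAut.conj g ∈ contAut G := fun g => (conjAut G g).2
  set Φhom : G →* ↥(contAut G) :=
    MonoidHom.codRestrict (MulAut.conj : G →* MulAut G) (contAut G) hconjmem with hΦdef
  have hker : ∀ z ∈ Subgroup.center G, Φhom z = 1 := fun z hz =>
    Subtype.ext (hconj_one z hz)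
  -- continuity of g ↦ conjAut g
  have hψcont : Continuous (fun g : G => conjAut G g) := by
    have h1 : ContinuousAt Φhom 1 := by
      rw [ContinuousAt, map_one, hbasisAut.tendsto_right_iff]
      intro F hF
      have hWA : ∀ A ∈ F, ∃ W : Set G, IsOpen W ∧ (1:G) ∈ W ∧
          ∀ h ∈ W, ⇑(MulAut.conj h) '' A = A := by
        intro A hA
        obtain ⟨g, U, hUS, rfl⟩ := hF A hA
        refine ⟨(U : Set G) ∩
          ((Subgroup.map ((conjAut G g : MulAut G)).toMonoidHom U : Subgroup G) : Set G),
          (hopen U hUS).inter (hopen _ (hinvar U hUS (conjAut G g))),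
          ⟨U.one_mem, (Subgroup.map _ U).one_mem⟩, ?_⟩
        rintro h ⟨hhU, hhV⟩
        obtain ⟨u, huU, hgu⟩ := Subgroup.mem_map.1 hhV
        have hgu' : g * u * g⁻¹ = h := hgu
        have hg : h * g = g * u := by rw [← hgu']; group
        have hg' : h⁻¹ * g = g * u⁻¹ := by rw [← hgu']; group
        ext y
        simp only [Set.mem_image]
        constructor
        · rintro ⟨a, ha, rfl⟩
          obtain ⟨u₀, hu₀, rfl⟩ := Set.mem_smul_set.1 ha
          refine Set.mem_smul_set.2 ⟨u * u₀ * h⁻¹,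
            mul_mem (mul_mem huU hu₀) (inv_mem hhU), ?_⟩
          show g * (u * u₀ * h⁻¹) = MulAut.conj h (g • u₀)
          show g * (u * u₀ * h⁻¹) = h * (g * u₀) * h⁻¹
          calc g * (u * u₀ * h⁻¹) = (g * u) * u₀ * h⁻¹ := by group
            _ = (h * g) * u₀ * h⁻¹ := by rw [hg]
            _ = h * (g * u₀) * h⁻¹ := by group
        · intro hy
          obtain ⟨u₀, hu₀, hyeq⟩ := Set.mem_smul_set.1 hy
          refine ⟨h⁻¹ * y * h, ?_, ?_⟩
          · refine Set.mem_smul_set.2 ⟨u⁻¹ * u₀ * h,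
              mul_mem (mul_mem (inv_mem huU) hu₀) hhU, ?_⟩
            show g * (u⁻¹ * u₀ * h) = h⁻¹ * y * h
            rw [← hyeq]
            show g * (u⁻¹ * u₀ * h) = h⁻¹ * (g * u₀) * h
            calc g * (u⁻¹ * u₀ * h) = (g * u⁻¹) * u₀ * h := by group
              _ = (h⁻¹ * g) * u₀ * h := by rw [hg']
              _ = h⁻¹ * (g * u₀) * h := by group
          · show h * (h⁻¹ * y * h) * h⁻¹ = y
            group
      choose Wf hWo hW1 hWfix using hWA
      set WW : Set G → Set G := fun A => if hA : A ∈ F then Wf A hA else Set.univ with hWWdef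
      have hWopen : IsOpen (⋂ A ∈ F, WW A) :=
        isOpen_biInter_finset fun A hA => by rw [hWWdef]; simp only; rw [dif_pos hA]; exact hWo A hA
      have hW1mem : (1:G) ∈ ⋂ A ∈ F, WW A := by
        refine Set.mem_iInter₂.2 fun A hA => ?_
        rw [hWWdef]; simp only; rw [dif_pos hA]; exact hW1 A hA
      refine Filter.eventually_of_mem (hWopen.mem_nhds hW1mem) ?_
      intro h hh A hA
      have hhA : h ∈ WW A := Set.mem_iInter₂.1 hh A hA
      rw [hWWdef] at hhA; simp only at hhA; rw [dif_pos hA] at hhA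
      exact hWfix A hA h hhA
    exact continuous_of_continuousAt_one Φhom h1
  -- the induced map on the quotient
  refine ⟨⇑(QuotientGroup.lift (Subgroup.center G) Φhom hker), fun g => rfl, ?_, ?_, ?_⟩
  · -- continuity
    have hq : Topology.IsQuotientMap (QuotientGroup.mk : G → G ⧸ Subgroup.center G) :=
      isQuotientMap_quotient_mk'
    exact hq.continuous_iff.mpr hψcont
  · -- injectivity
    intro a b hab
    obtain ⟨g, rfl⟩ := QuotientGroup.mk_surjective a
    obtain ⟨h, rfl⟩ := QuotientGroup.mk_surjective b
    have hval : MulAut.conj g = MulAut.conj h := congrArg Subtype.val hab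
    have h1 : MulAut.conj (g⁻¹ * h) = (1 : MulAut G) := by
      rw [map_mul, map_inv, hval]
      exact inv_mul_cancel _
    exact (QuotientGroup.eq).2 (hcenter_of_conj _ h1)
  · -- Borel range
    haveI : Nonempty G := ⟨1⟩
    letI := TopologicalSpace.upgradeIsCompletelyMetrizable G
    have hq : DenseRange (TopologicalSpace.denseSeq G) := TopologicalSpace.denseRange_denseSeq G
    letI mG : MeasurableSpace G := borel G
    haveI : BorelSpace G := ⟨rfl⟩
    letI mA : MeasurableSpace ↥(contAut G) := borel _
    haveI : BorelSpace ↥(contAut G) := ⟨rfl⟩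
    have hZc : IsClosed ((Subgroup.center G : Subgroup G) : Set G) := by
      have : ((Subgroup.center G : Subgroup G) : Set G) = ⋂ t : G, {z : G | t * z = z * t} := by
        ext z
        simp only [SetLike.mem_coe, Subgroup.mem_center_iff, Set.mem_iInter, Set.mem_setOf_eq]
      rw [this]
      exact isClosed_iInter fun t =>
        isClosed_eq (continuous_const.mul continuous_id) (continuous_id.mul continuous_const)
    have hcoset_closed : ∀ x : G, IsClosed (x • ((Subgroup.center G : Subgroup G) : Set G)) :=
      fun x => hZc.smul x
    have hopenW : ∀ W : Set G, IsOpen W →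
        MeasurableSet {x : G | ((x • ((Subgroup.center G : Subgroup G) : Set G)) ∩ W).Nonempty} := by
      intro W hW
      have hset : {x : G | ((x • ((Subgroup.center G : Subgroup G) : Set G)) ∩ W).Nonempty} =
          ⋃ z : ↥(Subgroup.center G), (fun x : G => x * (z:G)) ⁻¹' W := by
        ext x
        simp only [Set.mem_iUnion, Set.mem_preimage]
        constructor
        · rintro ⟨y, hy, hyW⟩
          obtain ⟨z, hz, rfl⟩ := Set.mem_smul_set.1 hy
          exact ⟨⟨z, hz⟩, by simpa [smul_eq_mul] using hyW⟩
        · rintro ⟨⟨z, hz⟩, hzW⟩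
          exact ⟨x * z, Set.mem_smul_set.2 ⟨z, hz, by simp [smul_eq_mul]⟩, hzW⟩
      rw [hset]
      exact (isOpen_iUnion fun z => hW.preimage (continuous_mul_right _)).measurableSet
    set r : G → G := Stmt17Aux.sel (Subgroup.center G) (TopologicalSpace.denseSeq G) with hrdef
    have hrmem : ∀ x, r x ∈ x • ((Subgroup.center G : Subgroup G) : Set G) :=
      fun x => Stmt17Aux.sel_mem _ hq x (hcoset_closed x)
    have hrcongr : ∀ {x y : G}, y ∈ x • ((Subgroup.center G : Subgroup G) : Set G) → r y = r x :=
      fun h => Stmt17Aux.sel_congr _ h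
    have hrmeas : Measurable r := Stmt17Aux.measurable_sel _ hq hopenW
    have hs : MeasurableSet {x : G | r x = x} := by
      have heq : {x : G | r x = x} = (fun x => (r x, x)) ⁻¹' (Set.diagonal G) := rfl
      rw [heq]
      exact (hrmeas.prodMk measurable_id) (isClosed_diagonal.measurableSet)
    have hconjAut_coset : ∀ (g y : G), y ∈ g • ((Subgroup.center G : Subgroup G) : Set G) →
        conjAut G y = conjAut G g := by
      intro g y hy
      obtain ⟨z, hz, hgz⟩ := Set.mem_smul_set.1 hy
      have hgz' : g * z = y := hgz
      apply Subtype.ext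
      show MulAut.conj y = MulAut.conj g
      rw [← hgz', map_mul, hconj_one z hz, mul_one]
    have hrange : Set.range (conjAut G) = (fun x => conjAut G x) '' {x : G | r x = x} := by
      ext φ
      constructor
      · rintro ⟨g, rfl⟩
        exact ⟨r g, hrcongr (hrmem g), hconjAut_coset g (r g) (hrmem g)⟩
      · rintro ⟨x, _, rfl⟩
        exact ⟨x, rfl⟩
    have hinj : Set.InjOn (fun x => conjAut G x) {x : G | r x = x} := by
      intro x hx y hy hxy
      have hval : MulAut.conj x = MulAut.conj y := congrArg Subtype.val hxy
      have h1 : MulAut.conj (x⁻¹ * y) = (1 : MulAut G) := by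
        rw [map_mul, map_inv, hval]
        exact inv_mul_cancel _
      have hz : x⁻¹ * y ∈ Subgroup.center G := hcenter_of_conj _ h1
      have hyx : y ∈ x • ((Subgroup.center G : Subgroup G) : Set G) :=
        Set.mem_smul_set.2 ⟨x⁻¹ * y, hz, by simp [smul_eq_mul]⟩
      have hrr := hrcongr hyx
      have hx' : r x = x := hx
      have hy' : r y = y := hy
      exact hx'.symm.trans (hrr.symm.trans hy')
    rw [hrange]
    exact hs.image_of_continuousOn_injOn hψcont.continuousOn hinj
end
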